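/- arXiv:0911.1271 — 7 statements merged into one kernel-verified Lean document; each statement's English description precedes it below -/
import Mathlib

section
/- Let N and m be coprime integers with m > N > 1, let W_{N,m} = { w ∈ ℤ_{>0} : w = βm − αN for some integers α ≥ 1 and 1 ≤ β ≤ N−1 }, and set g = (N−1)(m−1)/2. Then the sum of the elements of W_{N,m} equals (N²−1)(m²−1)/24 + g(g−1)/2. Equivalently, writing W_{N,m} = {w₁ < ⋯ < w_g} and w = Σ_{k=1}^{g} (w_k − k), one has w + g = (N²−1)(m²−1)/24. -/
lemma icc_insert (q : ℤ) (hq : 0 ≤ q) :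
    Finset.Icc (1:ℤ) (q+1) = insert (q+1) (Finset.Icc 1 q) := by
  ext x; simp only [Finset.mem_Icc, Finset.mem_insert]; omega

lemma sum_sq_lin (a b : ℤ) (n : ℕ) :
    6 * ∑ k ∈ Finset.Icc (1:ℤ) (n:ℤ), (a * k ^ 2 + b * k)
      = a * n * (n + 1) * (2 * n + 1) + 3 * b * n * (n + 1) := by
  induction n with
  | zero => simp
  | succ q ih =>
      push_cast
      rw [icc_insert q (by positivity), Finset.sum_insert (by simp)]
      push_cast at ih
      linear_combination ih

lemma sum_lin (c d : ℤ) (n : ℕ) :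
    2 * ∑ α ∈ Finset.Icc (1:ℤ) (n:ℤ), (c - α * d) = 2 * n * c - d * n * (n + 1) := by
  induction n with
  | zero => simp
  | succ q ih =>
      push_cast
      rw [icc_insert q (by positivity), Finset.sum_insert (by simp)]
      push_cast at ih
      linear_combination ih

lemma perm_sum (N m : ℤ) (hN : 1 < N) (hcop : IsCoprime N m) (f : ℤ → ℤ) :
    ∑ β ∈ Finset.Icc (1:ℤ) (N-1), f (β * m % N)
      = ∑ k ∈ Finset.Icc (1:ℤ) (N-1), f k := by
  have hN0 : (0:ℤ) < N := by linarith
  have hinj : ∀ x ∈ Finset.Icc (1:ℤ) (N-1), ∀ y ∈ Finset.Icc (1:ℤ) (N-1),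
      x * m % N = y * m % N → x = y := by
    intro x hx y hy h
    simp only [Finset.mem_Icc] at hx hy
    have hd : N ∣ y * m - x * m := Int.ModEq.dvd h
    have hd2 : N ∣ (y - x) * m := by
      have : (y - x) * m = y * m - x * m := by ring
      rw [this]; exact hd
    have hd3 : N ∣ y - x := hcop.dvd_of_dvd_mul_right hd2
    by_contra hne
    have h1 : N ∣ |y - x| := (dvd_abs _ _).mpr hd3
    have h2 : 0 < |y - x| := abs_pos.mpr (sub_ne_zero.mpr (fun e => hne e.symm))
    have h3 := Int.le_of_dvd h2 h1
    have h4 : |y - x| ≤ N - 2 := abs_le.mpr ⟨by omega, by omega⟩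
    omega
  have himg : Finset.image (fun β => β * m % N) (Finset.Icc (1:ℤ) (N-1))
      = Finset.Icc (1:ℤ) (N-1) := by
    apply Finset.eq_of_subset_of_card_le
    · intro r hr
      simp only [Finset.mem_image] at hr
      obtain ⟨β, hβ, rfl⟩ := hr
      simp only [Finset.mem_Icc] at hβ ⊢
      have h0 : 0 ≤ β * m % N := Int.emod_nonneg _ (by omega)
      have h1 : β * m % N < N := Int.emod_lt_of_pos _ hN0
      have hne : β * m % N ≠ 0 := by
        intro h
        have hdvd : N ∣ β * m := Int.dvd_of_emod_eq_zero h
        have : N ∣ β := hcop.dvd_of_dvd_mul_right hdvd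
        have := Int.le_of_dvd (by omega) this
        omega
      omega
    · rw [Finset.card_image_of_injOn (fun x hx y hy h => hinj x hx y hy h)]
  conv_rhs => rw [← himg]
  rw [Finset.sum_image hinj]

/-- For coprime integers `m > N > 1` and `g = (N−1)(m−1)/2`, the sum of the
elements of `W_{N,m} = { w > 0 : w = β*m − α*N, α ≥ 1, 1 ≤ β ≤ N−1 }` equals
`(N²−1)(m²−1)/24 + g(g−1)/2`; stated here after clearing denominators:
`24 * Σ = (N²−1)(m²−1) + 12*g*(g−1)`. -/
theorem gap_set_sum
    (N m : ℤ) (hN : 1 < N) (hm : N < m) (hcop : IsCoprime N m)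
    (g : ℤ) (hg : 2 * g = (N - 1) * (m - 1)) :
    24 * (∑ᶠ w ∈ {w : ℤ | 0 < w ∧ ∃ α β : ℤ, 1 ≤ α ∧ 1 ≤ β ∧ β ≤ N - 1 ∧
        w = β * m - α * N}, w)
      = (N ^ 2 - 1) * (m ^ 2 - 1) + 12 * g * (g - 1) := by
  have hN0 : (0:ℤ) < N := by linarith
  have hm0 : (0:ℤ) < m := by linarith
  set T := ((Finset.Icc (1:ℤ) (N-1)) ×ˢ (Finset.Icc (1:ℤ) m)).filter
      (fun p => 0 < p.1 * m - p.2 * N) with hT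
  have hinj : ∀ x ∈ T, ∀ y ∈ T, x.1 * m - x.2 * N = y.1 * m - y.2 * N → x = y := by
    rintro ⟨β₁, α₁⟩ h₁ ⟨β₂, α₂⟩ h₂ hEq
    simp only [hT, Finset.mem_filter, Finset.mem_product, Finset.mem_Icc] at h₁ h₂
    simp only at hEq
    have hd2 : N ∣ (β₂ - β₁) * m := ⟨α₂ - α₁, by linarith⟩
    have hd3 : N ∣ β₂ - β₁ := hcop.dvd_of_dvd_mul_right hd2
    have hβ : β₁ = β₂ := by
      by_contra hne
      have h1 : N ∣ |β₂ - β₁| := (dvd_abs _ _).mpr hd3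
      have h2 : 0 < |β₂ - β₁| := abs_pos.mpr (sub_ne_zero.mpr (fun e => hne e.symm))
      have h3 := Int.le_of_dvd h2 h1
      have h4 : |β₂ - β₁| ≤ N - 2 := abs_le.mpr ⟨by omega, by omega⟩
      omega
    subst hβ
    have hα : α₁ = α₂ := by
      have : α₁ * N = α₂ * N := by linarith
      exact mul_right_cancel₀ (by omega) this
    simp [hα]
  have hset : {w : ℤ | 0 < w ∧ ∃ α β : ℤ, 1 ≤ α ∧ 1 ≤ β ∧ β ≤ N - 1 ∧
      w = β * m - α * N} = ↑(T.image (fun p => p.1 * m - p.2 * N)) := by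
    ext w
    simp only [Set.mem_setOf_eq, Finset.coe_image, Set.mem_image, Finset.mem_coe,
      hT, Finset.mem_filter, Finset.mem_product, Finset.mem_Icc]
    constructor
    · rintro ⟨hw, α, β, hα, hβ1, hβ2, rfl⟩
      have hαm : α ≤ m := by nlinarith
      exact ⟨(β, α), ⟨⟨⟨hβ1, hβ2⟩, hα, hαm⟩, hw⟩, rfl⟩
    · rintro ⟨⟨β, α⟩, ⟨⟨⟨h1, h2⟩, h3, h4⟩, h5⟩, rfl⟩
      exact ⟨h5, α, β, h3, h1, h2, rfl⟩
  rw [hset, finsum_mem_coe_finset, Finset.sum_image hinj, hT,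
    Finset.sum_filter, Finset.sum_product]
  have key : ∀ β ∈ Finset.Icc (1:ℤ) (N-1),
      2 * N * (∑ α ∈ Finset.Icc (1:ℤ) m, if 0 < β * m - α * N then β * m - α * N else 0)
        = ((β * m) ^ 2 - N * (β * m)) + (N * (β * m % N) - (β * m % N) ^ 2) := by
    intro β hβ
    simp only [Finset.mem_Icc] at hβ
    set q := β * m / N with hqdef
    set r := β * m % N with hrdef
    have hqr : N * q + r = β * m := Int.mul_ediv_add_emod (β * m) N
    have hr0' : 0 ≤ r := Int.emod_nonneg _ (by omega)
    have hrN : r < N := Int.emod_lt_of_pos _ hN0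
    have hr0 : 0 < r := by
      rcases hr0'.lt_or_eq with h | h
      · exact h
      · exfalso
        have hdvd : N ∣ β * m := Int.dvd_of_emod_eq_zero h.symm
        have : N ∣ β := hcop.dvd_of_dvd_mul_right hdvd
        have := Int.le_of_dvd (by omega) this
        omega
    have hq0 : 0 ≤ q := Int.ediv_nonneg (by nlinarith) (le_of_lt hN0)
    have hqm : q < m := by nlinarith
    have hfilter : (Finset.Icc (1:ℤ) m).filter (fun α => 0 < β * m - α * N)
        = Finset.Icc 1 q := by
      ext α
      simp only [Finset.mem_filter, Finset.mem_Icc]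
      constructor
      · rintro ⟨⟨ha1, ha2⟩, ha3⟩
        refine ⟨ha1, ?_⟩
        nlinarith
      · rintro ⟨ha1, ha2⟩
        refine ⟨⟨ha1, by linarith⟩, ?_⟩
        nlinarith
    rw [← Finset.sum_filter, hfilter]
    obtain ⟨n, hn⟩ : ∃ n : ℕ, q = (n : ℤ) := ⟨q.toNat, (Int.toNat_of_nonneg hq0).symm⟩
    have hsl := sum_lin (β * m) N n
    rw [← hn] at hsl
    linear_combination N * hsl + (β * m - N * q + r - N) * hqr
  have htot : 2 * N * (∑ β ∈ Finset.Icc (1:ℤ) (N-1),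
      ∑ α ∈ Finset.Icc (1:ℤ) m, if 0 < β * m - α * N then β * m - α * N else 0)
      = ∑ k ∈ Finset.Icc (1:ℤ) (N-1), ((m^2 - 1) * k ^ 2 + (N - N * m) * k) := by
    rw [Finset.mul_sum]
    rw [Finset.sum_congr rfl key]
    rw [Finset.sum_add_distrib]
    rw [perm_sum N m hN hcop (fun r => N * r - r ^ 2)]
    rw [← Finset.sum_add_distrib]
    exact Finset.sum_congr rfl (fun k _ => by ring)
  obtain ⟨n, hn⟩ : ∃ n : ℕ, N - 1 = (n : ℤ) := ⟨(N-1).toNat, (Int.toNat_of_nonneg (by omega)).symm⟩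
  have hss := sum_sq_lin (m^2 - 1) (N - N * m) n
  rw [← hn] at hss
  apply mul_left_cancel₀ (show (N:ℤ) ≠ 0 by omega)
  linear_combination 12 * htot + 2 * hss - N * (6 * g + 3 * (N-1) * (m-1) - 6) * hg
end

section
/- Let N and m be coprime integers with m > N > 1, let W_{N,m} = { w ∈ ℤ_{>0} : w = βm − αN for some integers α ≥ 1 and 1 ≤ β ≤ N−1 }, set g = (N−1)(m−1)/2, and write W_{N,m} = {w₁ < w₂ < ⋯ < w_g}. Define π_k = w_{g−k+1} + k − g for k = 1, …, g. Then (π₁, …, π_g) is a non-increasing sequence of positive integers, and the Young diagram whose k-th row has length π_k is self-conjugate, i.e. equal to its own transpose. -/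
/-- The gap predicate. -/
private def GapP (N m x : ℤ) : Prop :=
  0 < x ∧ ∃ α β : ℤ, 1 ≤ α ∧ 1 ≤ β ∧ β ≤ N - 1 ∧ x = β * m - α * N

private lemma gap_range (N m : ℤ) (hN : 1 < N) (hm : N < m) {x : ℤ}
    (hx : GapP N m x) : 1 ≤ x ∧ x ≤ N * m - N - m := by
  obtain ⟨hx0, α, β, hα, hβ1, hβ2, hrep⟩ := hx
  constructor
  · omega
  · nlinarith [mul_nonneg (by linarith : (0:ℤ) ≤ N - 1 - β) (by linarith : (0:ℤ) ≤ m),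
      mul_nonneg (by linarith : (0:ℤ) ≤ α - 1) (by linarith : (0:ℤ) ≤ N)]

private lemma gap_sym (N m : ℤ) (hN : 1 < N) (hm : N < m) (hcop : IsCoprime N m)
    (y : ℤ) (hy0 : 0 ≤ y) (hyF : y ≤ N * m - N - m) :
    GapP N m y ↔ ¬ GapP N m (N * m - N - m - y) := by
  have hdvd : ∀ u v : ℤ, u * m = v * N → N ∣ u := by
    intro u v h
    exact hcop.dvd_of_dvd_mul_right ⟨v, by linear_combination h⟩
  constructor
  · rintro ⟨hy, α, β, hα, hβ1, hβ2, hrep⟩ ⟨hz, α₂, β₂, hα₂, hβ₂1, hβ₂2, hrep₂⟩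
    -- (β+β₂+1-N)*m = (α+α₂-1)*N
    have key : (β + β₂ + 1 - N) * m = (α + α₂ - 1) * N := by
      linear_combination -hrep - hrep₂
    obtain ⟨t, ht⟩ := hdvd _ _ key
    have htle : t ≤ 0 := by nlinarith
    have htge : 0 ≤ t := by nlinarith
    have ht1 : t = 0 := by omega
    have ht0 : β + β₂ + 1 - N = 0 := by rw [ht1] at ht; omega
    have hz0 : (α + α₂ - 1) * N = 0 := by rw [← key]; linear_combination m * ht0
    rcases mul_eq_zero.mp hz0 with h | h
    · omega
    · omega
  · intro hnot
    by_contra hyS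
    -- build canonical representation of y
    obtain ⟨u, v, huv⟩ := hcop
    set β : ℤ := (y * v) % N with hβdef
    set q : ℤ := (y * v) / N with hqdef
    have hNne : N ≠ 0 := by omega
    have hβ0 : 0 ≤ β := Int.emod_nonneg _ hNne
    have hβN : β < N := Int.emod_lt_of_pos _ (by omega)
    have hqβ : y * v = N * q + β := by
      rw [hβdef, hqdef]; exact (Int.mul_ediv_add_emod _ _).symm
    set α : ℤ := -(y * u + q * m) with hαdef
    have hrep : y = β * m - α * N := by
      linear_combination (-y) * huv + m * hqβ + N * hαdef
    -- divisibility helper for contradiction cases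
    have hdvd_small : ∀ c : ℤ, 1 ≤ c → c ≤ N - 1 → ¬ N ∣ c := by
      intro c hc1 hc2 hdc
      have := Int.le_of_dvd (by omega) hdc
      omega
    rcases eq_or_lt_of_le hβ0 with hβeq | hβpos
    · -- β = 0 : y = -αN, y ≥ 0 so α ≤ 0; F - y ∈ Gap with β' = N-1, α' = 1-α
      have hyα : y = -α * N := by rw [hrep, ← hβeq]; ring
      have hα0 : α ≤ 0 := by nlinarith
      apply hnot
      refine ⟨?_, 1 - α, N - 1, by omega, by omega, by omega, by rw [hyα]; ring⟩
      have hge : 0 ≤ N * m - N - m - y := by omega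
      rcases eq_or_lt_of_le hge with heq | h
      · exfalso
        have : (N - 1) * m = (1 - α) * N := by linear_combination -heq + hyα
        exact hdvd_small _ (by omega) (by omega) (hdvd _ _ this)
      · exact h
    · -- β ≥ 1
      by_cases hα1 : 1 ≤ α
      · -- then y ∈ Gap unless y = 0, which is impossible
        exfalso
        rcases eq_or_lt_of_le hy0 with hy00 | hypos
        · have : β * m = α * N := by linarith [hrep]
          exact hdvd_small β (by omega) (by omega) (hdvd _ _ this)
        · exact hyS ⟨hypos, α, β, hα1, by omega, by omega, hrep⟩
      · -- α ≤ 0; then β ≤ N-2 (else y > F), and F - y ∈ Gap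
        push_neg at hα1
        have hβle : β ≤ N - 2 := by
          by_contra hb
          have hβeq : β = N - 1 := by omega
          have : y = (N - 1) * m - α * N := by rw [hrep, hβeq]
          nlinarith
        apply hnot
        refine ⟨?_, 1 - α, N - 1 - β, by omega, by omega, by omega,
          by rw [hrep]; ring⟩
        have hge : 0 ≤ N * m - N - m - y := by omega
        rcases eq_or_lt_of_le hge with heq | h
        · exfalso
          have : (N - 1 - β) * m = (1 - α) * N := by linear_combination -heq + hrep
          exact hdvd_small _ (by omega) (by omega) (hdvd _ _ this)
        · exact h

/-- For coprime integers `m > N > 1`, `g = (N−1)(m−1)/2`, write the gap set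
`W_{N,m} = {w₁ < w₂ < ⋯ < w_g}` (enumerated by `w : ℕ → ℤ` on indices
`1, …, g`). Define `π_k = w_{g−k+1} + k − g` for `1 ≤ k ≤ g` and `π_k = 0` for
`k > g`. Then `(π₁, …, π_g)` is a non-increasing sequence of positive
integers, and the associated Young diagram (whose `k`-th row has `π_k` cells)
is self-conjugate: the cell `(i, j)` belongs to the diagram iff `(j, i)`
does. -/
theorem gap_partition_selfconjugate
    (N m : ℤ) (hN : 1 < N) (hm : N < m) (hcop : IsCoprime N m)
    (g : ℕ) (hg : (g : ℤ) * 2 = (N - 1) * (m - 1))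
    (w : ℕ → ℤ)
    (hmono : StrictMonoOn w (Set.Icc 1 g))
    (hmem : ∀ k : ℕ, 1 ≤ k → k ≤ g →
      w k ∈ {x : ℤ | 0 < x ∧ ∃ α β : ℤ, 1 ≤ α ∧ 1 ≤ β ∧ β ≤ N - 1 ∧
        x = β * m - α * N})
    (hsurj : ∀ x ∈ {x : ℤ | 0 < x ∧ ∃ α β : ℤ, 1 ≤ α ∧ 1 ≤ β ∧ β ≤ N - 1 ∧
        x = β * m - α * N}, ∃ k : ℕ, 1 ≤ k ∧ k ≤ g ∧ w k = x)
    (π : ℕ → ℤ)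
    (hπ : ∀ k : ℕ, 1 ≤ k → k ≤ g → π k = w (g - k + 1) + (k : ℤ) - (g : ℤ))
    (hπ0 : ∀ k : ℕ, g < k → π k = 0) :
    (∀ k : ℕ, 1 ≤ k → k ≤ g → 0 < π k) ∧
    (∀ k : ℕ, 1 ≤ k → k < g → π (k + 1) ≤ π k) ∧
    (∀ i j : ℕ, 1 ≤ i → 1 ≤ j → ((j : ℤ) ≤ π i ↔ (i : ℤ) ≤ π j)) := by
  classical
  set F : ℤ := N * m - N - m with hF
  have hFg : F + 1 = 2 * (g : ℤ) := by rw [hF]; linear_combination -hg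
  have hgap_mem : ∀ k : ℕ, 1 ≤ k → k ≤ g → GapP N m (w k) := fun k h1 h2 => hmem k h1 h2
  have hgap_surj : ∀ x : ℤ, GapP N m x → ∃ k : ℕ, 1 ≤ k ∧ k ≤ g ∧ w k = x :=
    fun x hx => hsurj x hx
  have hw1 : ∀ k : ℕ, 1 ≤ k → k ≤ g → 1 ≤ w k ∧ w k ≤ F :=
    fun k h1 h2 => gap_range N m hN hm (hgap_mem k h1 h2)
  -- strict mono gap estimate
  have hgaplem : ∀ k l : ℕ, 1 ≤ k → k ≤ l → l ≤ g → w k + ((l : ℤ) - k) ≤ w l := by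
    intro k l hk hkl hlg
    induction l, hkl using Nat.le_induction with
    | base => simp
    | succ n hn ih =>
      have hng : n ≤ g := by omega
      have h1 : w n < w (n + 1) :=
        hmono (Set.mem_Icc.mpr ⟨by omega, hng⟩) (Set.mem_Icc.mpr ⟨by omega, by omega⟩)
          (by omega)
      have := ih (by omega)
      push_cast
      push_cast at this
      omega
  -- counting function
  set cnt : ℤ → ℕ := fun x => ((Finset.Icc 1 g).filter (fun k => w k ≤ x)).card with hcnt
  have hM : ∀ (a : ℕ) (x : ℤ), 1 ≤ a → a ≤ g → (w a ≤ x ↔ a ≤ cnt x) := by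
    intro a x ha hag
    constructor
    · intro hwa
      have hsub : Finset.Icc 1 a ⊆ (Finset.Icc 1 g).filter (fun k => w k ≤ x) := by
        intro k hk
        rw [Finset.mem_Icc] at hk
        rw [Finset.mem_filter, Finset.mem_Icc]
        refine ⟨⟨hk.1, by omega⟩, le_trans ?_ hwa⟩
        exact hmono.monotoneOn (Set.mem_Icc.mpr ⟨hk.1, by omega⟩)
          (Set.mem_Icc.mpr ⟨ha, hag⟩) hk.2
      have := Finset.card_le_card hsub
      rwa [Nat.card_Icc, Nat.add_sub_cancel] at this
    · intro hc
      by_contra hwa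
      push_neg at hwa
      have hsub : (Finset.Icc 1 g).filter (fun k => w k ≤ x) ⊆ Finset.Ico 1 a := by
        intro k hk
        rw [Finset.mem_filter, Finset.mem_Icc] at hk
        rw [Finset.mem_Ico]
        refine ⟨hk.1.1, ?_⟩
        by_contra hka
        push_neg at hka
        have : w a ≤ w k :=
          hmono.monotoneOn (Set.mem_Icc.mpr ⟨ha, hag⟩)
            (Set.mem_Icc.mpr ⟨hk.1.1, hk.1.2⟩) hka
        omega
      have hc' : a ≤ ((Finset.Icc 1 g).filter (fun k => w k ≤ x)).card := hc
      have := Finset.card_le_card hsub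
      rw [Nat.card_Ico] at this
      omega
  -- bridge to integer counting
  have hA : ∀ x : ℤ, cnt x = ((Finset.Icc 0 x).filter (fun y => GapP N m y)).card := by
    intro x
    apply Finset.card_bij (fun k _ => w k)
    · intro k hk
      rw [Finset.mem_filter, Finset.mem_Icc] at hk
      rw [Finset.mem_filter, Finset.mem_Icc]
      have := hw1 k hk.1.1 hk.1.2
      exact ⟨⟨by omega, hk.2⟩, hgap_mem k hk.1.1 hk.1.2⟩
    · intro k₁ hk₁ k₂ hk₂ heq
      rw [Finset.mem_filter, Finset.mem_Icc] at hk₁ hk₂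
      exact hmono.injOn (Set.mem_Icc.mpr ⟨hk₁.1.1, hk₁.1.2⟩)
        (Set.mem_Icc.mpr ⟨hk₂.1.1, hk₂.1.2⟩) heq
    · intro y hy
      rw [Finset.mem_filter, Finset.mem_Icc] at hy
      obtain ⟨k, hk1, hk2, hk3⟩ := hgap_surj y hy.2
      exact ⟨k, by rw [Finset.mem_filter, Finset.mem_Icc]; exact ⟨⟨hk1, hk2⟩, by omega⟩, hk3⟩
  have hcntF : cnt F = g := by
    rw [hcnt]
    have : (Finset.Icc 1 g).filter (fun k => w k ≤ F) = Finset.Icc 1 g := by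
      apply Finset.filter_true_of_mem
      intro k hk
      rw [Finset.mem_Icc] at hk
      exact (hw1 k hk.1 hk.2).2
    simp [this]
  -- symmetry of counts
  have hSym : ∀ x : ℤ, 0 ≤ x → x ≤ F → (cnt x : ℤ) + g = x + 1 + cnt (F - 1 - x) := by
    intro x hx0 hxF
    have hsplit : ((Finset.Icc 0 x).filter (fun y => GapP N m y)).card
        + ((Finset.Icc 0 x).filter (fun y => ¬ GapP N m y)).card = (Finset.Icc 0 x).card :=
      Finset.card_filter_add_card_filter_not _
    have hcardIcc : (Finset.Icc 0 x).card = (x + 1).toNat := by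
      rw [Int.card_Icc]; congr 1; omega
    -- bijection: complement below x ↔ gaps in [F-x, F]
    have hbij : ((Finset.Icc 0 x).filter (fun y => ¬ GapP N m y)).card
        = ((Finset.Icc (F - x) F).filter (fun y => GapP N m y)).card := by
      apply Finset.card_bij (fun y _ => F - y)
      · intro y hy
        rw [Finset.mem_filter, Finset.mem_Icc] at hy
        rw [Finset.mem_filter, Finset.mem_Icc]
        refine ⟨⟨by omega, by omega⟩, ?_⟩
        by_contra hcontra
        exact hy.2 ((gap_sym N m hN hm hcop y hy.1.1 (by omega)).mpr hcontra)
      · intro y₁ hy₁ y₂ hy₂ heq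
        omega
      · intro z hz
        rw [Finset.mem_filter, Finset.mem_Icc] at hz
        refine ⟨F - z, ?_, by ring⟩
        rw [Finset.mem_filter, Finset.mem_Icc]
        refine ⟨⟨by omega, by omega⟩, ?_⟩
        intro hFz
        have := (gap_sym N m hN hm hcop (F - z) (by omega) (by omega)).mp hFz
        have hzz : F - (F - z) = z := by ring
        rw [hzz] at this
        exact this hz.2
    -- split Icc 0 F
    have hsplit2 : ((Finset.Icc 0 F).filter (fun y => GapP N m y)).card
        = ((Finset.Icc 0 (F - 1 - x)).filter (fun y => GapP N m y)).card
          + ((Finset.Icc (F - x) F).filter (fun y => GapP N m y)).card := by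
      rw [← Finset.card_union_of_disjoint, ← Finset.filter_union]
      · congr 2
        ext y
        simp only [Finset.mem_union, Finset.mem_Icc]
        omega
      · rw [Finset.disjoint_left]
        intro y hy₁ hy₂
        rw [Finset.mem_filter, Finset.mem_Icc] at hy₁ hy₂
        omega
    have e1 := hA x
    have e2 := hA (F - 1 - x)
    have e3 := hA F
    rw [hcntF] at e3
    omega
  -- cnt at w a - 1
  have hcnt_pred : ∀ a : ℕ, 1 ≤ a → a ≤ g → (cnt (w a - 1) : ℤ) = (a : ℤ) - 1 := by
    intro a ha hag
    have hub : ¬ (a ≤ cnt (w a - 1)) := by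
      rw [← hM a _ ha hag]; omega
    rcases Nat.eq_or_lt_of_le ha with ha1 | ha2
    · have : cnt (w a - 1) < a := by omega
      omega
    · have hlow : (a - 1 : ℕ) ≤ cnt (w a - 1) := by
        rw [← hM (a - 1) _ (by omega) (by omega)]
        have : w (a - 1) < w a :=
          hmono (Set.mem_Icc.mpr ⟨by omega, by omega⟩) (Set.mem_Icc.mpr ⟨ha, hag⟩) (by omega)
        omega
      omega
  -- core symmetric criterion
  have hcore : ∀ a b : ℕ, 1 ≤ a → a ≤ g → 1 ≤ b → b ≤ g →
      (F + 1 ≤ w a + w b ↔ (g : ℤ) + a - b ≤ w a) := by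
    intro a b ha hag hb hbg
    have hwa := hw1 a ha hag
    have hsym := hSym (w a - 1) (by omega) (by omega)
    have hpred := hcnt_pred a ha hag
    have hx : F - 1 - (w a - 1) = F - w a := by ring
    rw [hx] at hsym
    have hcntval : (cnt (F - w a) : ℤ) = (a : ℤ) - 1 + g - w a := by omega
    have hMb := hM b (F - w a) hb hbg
    constructor
    · intro h
      have h2 : ¬ (w b ≤ F - w a) := by omega
      have h3 : ¬ (b ≤ cnt (F - w a)) := fun hb' => h2 (hMb.mpr hb')
      omega
    · intro h
      have h3 : ¬ (b ≤ cnt (F - w a)) := by omega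
      have h2 : ¬ (w b ≤ F - w a) := fun hb' => h3 (hMb.mp hb')
      omega
  -- bound: π k ≤ g for k in range
  have hπ_ub : ∀ k : ℕ, 1 ≤ k → k ≤ g → π k ≤ (g : ℤ) := by
    intro k hk hkg
    rw [hπ k hk hkg]
    have hb1 : 1 ≤ g - k + 1 := by omega
    have hb2 : g - k + 1 ≤ g := by omega
    have := hgaplem (g - k + 1) g hb1 hb2 le_rfl
    have hwg := hw1 g (by omega) le_rfl
    have hcast : ((g - k + 1 : ℕ) : ℤ) = (g : ℤ) - k + 1 := by omega
    rw [hcast] at this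
    omega
  refine ⟨?_, ?_, ?_⟩
  · -- positivity
    intro k hk hkg
    rw [hπ k hk hkg]
    have hb1 : 1 ≤ g - k + 1 := by omega
    have hb2 : g - k + 1 ≤ g := by omega
    have := hgaplem 1 (g - k + 1) le_rfl hb1 hb2
    have hw11 := (hw1 1 le_rfl (by omega)).1
    have hcast : ((g - k + 1 : ℕ) : ℤ) = (g : ℤ) - k + 1 := by omega
    rw [hcast] at this
    omega
  · -- monotone
    intro k hk hkg
    rw [hπ k hk (by omega), hπ (k + 1) (by omega) (by omega)]
    have h1 : w (g - k) < w (g - k + 1) :=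
      hmono (Set.mem_Icc.mpr ⟨by omega, by omega⟩) (Set.mem_Icc.mpr ⟨by omega, by omega⟩)
        (by omega)
    have hidx : g - (k + 1) + 1 = g - k := by omega
    rw [hidx]
    push_cast
    omega
  · -- self-conjugacy
    intro i j hi hj
    by_cases hig : i ≤ g
    · by_cases hjg : j ≤ g
      · rw [hπ i hi hig, hπ j hj hjg]
        have h1 := hcore (g - i + 1) (g - j + 1) (by omega) (by omega) (by omega) (by omega)
        have h2 := hcore (g - j + 1) (g - i + 1) (by omega) (by omega) (by omega) (by omega)
        constructor
        · intro h
          have hA : (g : ℤ) + (g - i + 1 : ℕ) - (g - j + 1 : ℕ) ≤ w (g - i + 1) := by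
            push_cast
            omega
          have hB := h1.mpr hA
          have hC := h2.mp (by omega)
          push_cast at hC
          omega
        · intro h
          have hA : (g : ℤ) + (g - j + 1 : ℕ) - (g - i + 1 : ℕ) ≤ w (g - j + 1) := by
            push_cast
            omega
          have hB := h2.mpr hA
          have hC := h1.mp (by omega)
          push_cast at hC
          omega
      · -- j > g : π j = 0, and π i ≤ g < j
        rw [hπ0 j (by omega)]
        have := hπ_ub i hi hig
        constructor
        · intro h; omega
        · intro h; omega
    · -- i > g : π i = 0
      rw [hπ0 i (by omega)]
      by_cases hjg : j ≤ g
      · have := hπ_ub j hj hjg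
        constructor
        · intro h; omega
        · intro h; omega
      · rw [hπ0 j (by omega)]
        constructor
        · intro h; omega
        · intro h; omega
end

section
/- Let A be a commutative ℚ-algebra and let S ∈ A[[z]] be a formal power series whose constant term is a unit of A. Put G = S², and define a sequence R_j ∈ A[[z]] (j ≥ 1) by R₁ = G′ and R_{j+1} = (2/(j+1)) · (2 R_j′ · G − (2j−1) · R_j · G′), where ′ denotes the formal derivative d/dz. Then for every j ≥ 1 one has (2S)^{2j−1} · S^{(j)} = j! · R_j, where S^{(j)} is the j-th formal derivative of S. -/
open PowerSeries

private lemma derivativeFun_C' {R : Type*} [CommRing R] (r : R) :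
    derivativeFun (C r : R⟦X⟧) = 0 := derivative_C (r := r)

private lemma deriv_qsmul {A : Type*} [CommRing A] [Algebra ℚ A] (q : ℚ) (f : A⟦X⟧) :
    derivativeFun (q • f) = q • derivativeFun f := by
  rw [Algebra.smul_def, Algebra.smul_def, PowerSeries.algebraMap_apply,
    derivativeFun_mul, derivativeFun_C', smul_zero, add_zero, smul_eq_mul]

private lemma qsmul_eq {A : Type*} [CommRing A] [Algebra ℚ A] (q : ℚ) (f : A⟦X⟧) :
    q • f = C (algebraMap ℚ A q) * f := by
  rw [Algebra.smul_def, PowerSeries.algebraMap_apply]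

private lemma derivFun_pow {R : Type*} [CommRing R] (f : R⟦X⟧) (n : ℕ) :
    derivativeFun (f ^ (n + 1)) = ((n : R⟦X⟧) + 1) * f ^ n * derivativeFun f := by
  induction n with
  | zero => simp
  | succ n ih =>
    rw [pow_succ, derivativeFun_mul, ih]
    simp only [smul_eq_mul]
    push_cast
    ring

/-- Let `A` be a commutative `ℚ`-algebra and `S` a formal power series whose
constant term is a unit. Put `G = S²` and define `R₁ = G′`,
`R_{j+1} = (2/(j+1)) * (2 R_j′ G − (2j−1) R_j G′)`. Then for every `j ≥ 1` one
has `(2S)^{2j−1} * S^{(j)} = j! * R_j`. -/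
theorem derivative_recursion_identity
    (A : Type*) [CommRing A] [Algebra ℚ A]
    (S : PowerSeries A) (hS : IsUnit (constantCoeff S))
    (G : PowerSeries A) (hG : G = S * S)
    (R : ℕ → PowerSeries A)
    (hR1 : R 1 = derivativeFun G)
    (hRstep : ∀ j : ℕ, 1 ≤ j →
      R (j + 1) = (2 / ((j : ℚ) + 1)) •
        ((2 : A⟦X⟧) * derivativeFun (R j) * G
          - ((2 * (j : ℚ) - 1) • R j) * derivativeFun G)) :
    ∀ j : ℕ, 1 ≤ j →
      ((2 : A⟦X⟧) * S) ^ (2 * j - 1) * (derivativeFun^[j] S)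
        = ((Nat.factorial j : ℚ)) • R j := by
  have hG' : derivativeFun G = 2 * S * derivativeFun S := by
    rw [hG, derivativeFun_mul]; simp only [smul_eq_mul]; ring
  intro j hj
  induction j, hj using Nat.le_induction with
  | base =>
    simp only [hR1, hG', Nat.factorial_one, Nat.cast_one, one_smul, pow_one,
      Function.iterate_one]
    ring
  | succ j hj ih =>
    obtain ⟨k, rfl⟩ : ∃ k, j = k + 1 := ⟨j - 1, by omega⟩
    have h2 : 2 * (k + 1) - 1 = 2 * k + 1 := by omega
    have h3 : 2 * (k + 1 + 1) - 1 = 2 * k + 3 := by omega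
    rw [h2] at ih
    rw [h3, hRstep (k + 1) (by omega), Function.iterate_succ_apply',
      qsmul_eq, qsmul_eq, qsmul_eq]
    rw [qsmul_eq] at ih
    -- differentiate the induction hypothesis
    have hD := congrArg derivativeFun ih
    have hd2S : derivativeFun ((2 : A⟦X⟧) * S) = 2 * derivativeFun S := by
      rw [derivativeFun_mul]
      simp only [smul_eq_mul]
      rw [show (2 : A⟦X⟧) = C 2 from (map_ofNat C 2).symm, derivativeFun_C']
      push_cast
      ring
    rw [derivativeFun_mul, derivativeFun_mul, derivativeFun_C', smul_zero, add_zero,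
      show 2 * k + 1 = (2 * k) + 1 from rfl, derivFun_pow, hd2S] at hD
    simp only [smul_eq_mul] at hD
    -- constant identities
    have hc1 : C (algebraMap ℚ A ((Nat.factorial (k + 1 + 1) : ℚ))) *
        C (algebraMap ℚ A (2 / (((k + 1 : ℕ) : ℚ) + 1))) =
        2 * C (algebraMap ℚ A ((Nat.factorial (k + 1) : ℚ))) := by
      rw [← map_mul, ← map_mul, ← map_ofNat C 2, ← map_ofNat (algebraMap ℚ A) 2,
        ← map_mul, ← map_mul]
      congr 2
      push_cast [Nat.factorial_succ (k + 1)]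
      field_simp
    have hc2 : C (algebraMap ℚ A (2 * (((k + 1 : ℕ) : ℚ)) - 1)) =
        2 * ((k : A⟦X⟧)) + 1 := by
      have h : (2 * (((k + 1 : ℕ) : ℚ)) - 1) = ((2 * k + 1 : ℕ) : ℚ) := by push_cast; ring
      rw [h, map_natCast, map_natCast]
      push_cast
      ring
    rw [hc2, hG', hG]
    push_cast at hD ih hc1 ⊢
    linear_combination (4 * S * S) * hD -
      (4 * ((2 * (k : A⟦X⟧) + 1)) * S * derivativeFun S) * ih -
      ((2 * derivativeFun (R (k + 1)) * (S * S)
          - ((2 * (k : A⟦X⟧) + 1) * R (k + 1)) * (2 * S * derivativeFun S))) * hc1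
end

section
/- Let K be a commutative ℚ-algebra, let F ∈ K[x] be a polynomial, and define a sequence of polynomials R_j ∈ K[x, z] (j ≥ 1) by R₁(x, z) = −F′(x − z) and R_{j+1}(x, z) = (2/(j+1)) · ( 2 · (∂R_j/∂z)(x, z) · F(x − z) + (2j−1) · R_j(x, z) · F′(x − z) ). Then for every α ∈ K with F(α) = 0 and every j ≥ 1, one has R_j(α, 0) = −c_{j−1} · F′(α)^j, where c_i denotes the i-th Catalan number. -/
open Polynomial

lemma eval_eval_aeval_sub {K : Type*} [CommRing K] (G : Polynomial K) (α : K) :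
    ((Polynomial.aeval ((C X : Polynomial (Polynomial K)) - X) G).eval (0:Polynomial K)).eval α
      = G.eval α := by
  induction G using Polynomial.induction_on' with
  | add p q hp hq => simp [hp, hq]
  | monomial n a => simp [aeval_monomial, Polynomial.algebraMap_apply]

lemma catalan_rec (m : ℕ) : (m + 2) * catalan (m + 1) = 2 * (2 * m + 1) * catalan m := by
  have h1 := succ_mul_catalan_eq_centralBinom (m + 1)
  have h2 := Nat.succ_mul_centralBinom_succ m
  have h3 := succ_mul_catalan_eq_centralBinom m
  have h1' : (m + 2) * catalan (m + 1) = (m + 1).centralBinom := h1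
  have key : (m + 1) * ((m + 2) * catalan (m + 1)) = (m + 1) * (2 * (2 * m + 1) * catalan m) := by
    calc (m + 1) * ((m + 2) * catalan (m + 1)) = (m + 1) * (m + 1).centralBinom := by rw [h1']
      _ = 2 * (2 * m + 1) * Nat.centralBinom m := h2
      _ = 2 * (2 * m + 1) * ((m + 1) * catalan m) := by rw [h3]
      _ = (m + 1) * (2 * (2 * m + 1) * catalan m) := by ring
  exact Nat.eq_of_mul_eq_mul_left (Nat.succ_pos m) key

/-- Let `K` be a commutative `ℚ`-algebra and `F ∈ K[x]`. Viewing `K[x,z]` as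
`(K[x])[z]` (outer variable `z`, with `x = C X`), define `R₁ = −F′(x−z)` and
`R_{j+1} = (2/(j+1)) * (2 (∂R_j/∂z) F(x−z) + (2j−1) R_j F′(x−z))`. Then for
every root `α` of `F` and every `j ≥ 1`, `R_j(α, 0) = −c_{j−1} F′(α)^j`,
where `c_i` is the `i`-th Catalan number. -/
theorem division_polynomial_value_at_root
    (K : Type*) [CommRing K] [Algebra ℚ K]
    (F : Polynomial K)
    (R : ℕ → Polynomial (Polynomial K))
    (hR1 : R 1 = - Polynomial.aeval
      ((C X : Polynomial (Polynomial K)) - X) (derivative F))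
    (hRstep : ∀ j : ℕ, 1 ≤ j →
      R (j + 1) = (2 / ((j : ℚ) + 1)) •
        ((2 : Polynomial (Polynomial K)) * derivative (R j)
            * Polynomial.aeval ((C X : Polynomial (Polynomial K)) - X) F
          + ((2 * (j : ℚ) - 1) • R j)
            * Polynomial.aeval ((C X : Polynomial (Polynomial K)) - X)
                (derivative F))) :
    ∀ α : K, F.eval α = 0 → ∀ j : ℕ, 1 ≤ j →
      ((R j).eval (0 : Polynomial K)).eval α
        = - (catalan (j - 1) : K) * ((derivative F).eval α) ^ j := by
  intro α hα j hj
  induction j with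
  | zero => omega
  | succ n ih =>
    rcases Nat.lt_or_ge n 1 with h | h
    · -- n = 0, base case
      interval_cases n
      rw [hR1]
      simp [eval_eval_aeval_sub]
    · -- inductive step, n ≥ 1
      obtain ⟨m, rfl⟩ : ∃ m, n = m + 1 := ⟨n - 1, by omega⟩
      have ihv := ih h
      rw [hRstep (m + 1) h]
      have hF0 : ((Polynomial.aeval ((C X : Polynomial (Polynomial K)) - X) F).eval
          (0 : Polynomial K)).eval α = 0 := by rw [eval_eval_aeval_sub]; exact hα
      have hF' : ((Polynomial.aeval ((C X : Polynomial (Polynomial K)) - X)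
          (derivative F)).eval (0 : Polynomial K)).eval α = (derivative F).eval α := by
        rw [eval_eval_aeval_sub]
      simp only [Polynomial.eval_smul, eval_add, eval_mul, hF0, hF', mul_zero, zero_add,
        eval_ofNat]
      rw [ihv]
      simp only [Nat.add_sub_cancel]
      push_cast
      set d := (derivative F).eval α
      -- goal: (2 / (↑(m+1)+1)) • ((2*↑(m+1)-1) • (-(catalan m) * d^(m+1)) * d) = ...
      have hsmul : ∀ (q : ℚ) (x : K), q • x = algebraMap ℚ K q * x := fun q x => by
        rw [Algebra.smul_def]
      rw [smul_mul_assoc, hsmul, hsmul, ← mul_assoc, ← map_mul]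
      have hq : (2 / ((m : ℚ) + 1 + 1)) * (2 * ((m : ℚ) + 1) - 1) * (catalan m : ℚ)
          = (catalan (m + 1) : ℚ) := by
        have h := catalan_rec m
        have hcast : ((m : ℚ) + 2) * (catalan (m + 1) : ℚ)
            = 2 * (2 * (m : ℚ) + 1) * (catalan m : ℚ) := by
          exact_mod_cast congrArg (Nat.cast : ℕ → ℚ) h
        have hm : ((m : ℚ) + 2) ≠ 0 := by positivity
        field_simp
        linarith [hcast]
      have hA : algebraMap ℚ K (2 / ((m : ℚ) + 1 + 1) * (2 * ((m : ℚ) + 1) - 1))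
          * (catalan m : K) = (catalan (m + 1) : K) := by
        rw [← map_natCast (algebraMap ℚ K) (catalan m), ← map_mul, hq, map_natCast]
      linear_combination (- (d ^ (m + 1) * d)) * hA
end

section
/- For all integers l ≥ 1 and m ≥ 1, the m × m Hankel determinant of Catalan numbers det( c_{l+i+j−2} )_{1 ≤ i,j ≤ m} equals ∏_{1 ≤ i ≤ j ≤ l−1} (i + j + 2m)/(i + j), as an identity of rational numbers. -/
open Finset Matrix Equiv

namespace CatalanHankelAux

/-- cast of factorial successor -/
lemma fs (n : ℕ) : ((Nat.factorial (n+1) : ℚ)) = (n+1) * (Nat.factorial n : ℚ) := by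
  push_cast [Nat.factorial_succ]; ring

lemma fne (n : ℕ) : (Nat.factorial n : ℚ) ≠ 0 := by
  exact_mod_cast Nat.factorial_ne_zero n

lemma fpos (n : ℕ) : (0:ℚ) < (Nat.factorial n : ℚ) := by
  exact_mod_cast Nat.factorial_pos n

/-- the factor `g j m = (2m+2j)! j! / ((2m+j)! (2j)!)` -/
noncomputable def g (j m : ℕ) : ℚ :=
  (Nat.factorial (2*m+2*j) : ℚ) * (Nat.factorial j : ℚ) /
    ((Nat.factorial (2*m+j) : ℚ) * (Nat.factorial (2*j) : ℚ))

noncomputable def F (l m : ℕ) : ℚ := ∏ j ∈ Finset.range l, g j m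

lemma gpos (j m : ℕ) : 0 < g j m := by
  unfold g
  positivity

lemma Fpos (l m : ℕ) : 0 < F l m := Finset.prod_pos fun j _ => gpos j m

lemma F_succ (l m : ℕ) : F (l+1) m = F l m * g l m := Finset.prod_range_succ _ _

lemma g_zero (m : ℕ) : g 0 m = 1 := by
  unfold g
  rw [mul_comm]
  simp only [Nat.mul_zero, Nat.add_zero, Nat.factorial_zero, Nat.cast_one, one_mul, mul_one]
  exact div_self (fne _)

lemma F_zero_right (l : ℕ) : F l 0 = 1 := by
  unfold F
  apply Finset.prod_eq_one
  intro j _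
  unfold g
  rw [show 2*0+2*j = 2*j from by ring, show 2*0+j = j from by ring,
    mul_comm ((Nat.factorial (2*j) : ℚ)) ((Nat.factorial j : ℚ))]
  exact div_self (mul_ne_zero (fne _) (fne _))

/-- mixed ratio -/
noncomputable def T (l m : ℕ) : ℚ :=
  (Nat.factorial (2*m+2*l) : ℚ) * (Nat.factorial (2*m+1) : ℚ) /
    ((Nat.factorial (2*m+l+1) : ℚ) * (Nat.factorial (2*m+l) : ℚ))

lemma FT : ∀ l m : ℕ, F l (m+1) = F l m * T l m := by
  intro l
  induction l with
  | zero =>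
      intro m
      unfold F T
      simp only [Finset.prod_range_zero, one_mul, Nat.mul_zero, Nat.add_zero]
      rw [mul_comm ((Nat.factorial (2*m)) : ℚ)]
      exact (div_self (mul_ne_zero (fne _) (fne _))).symm
  | succ l ih =>
      intro m
      have he : T l m * g l (m+1) = g l m * T (l+1) m := by
        unfold T g
        rw [show 2*(m+1)+2*l = 2*m+2*(l+1) from by ring,
            show 2*(m+1)+l = 2*m+(l+1)+1 from by ring]
        ring
      rw [F_succ, F_succ, ih m]
      calc F l m * T l m * g l (m+1) = F l m * (T l m * g l (m+1)) := by ring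
        _ = F l m * (g l m * T (l+1) m) := by rw [he]
        _ = F l m * g l m * T (l+1) m := by ring

lemma key (l m : ℕ) :
    T l m * T l (m+1) * (g l m * g (l+1) m)
      = T l m * (g l m * g (l+1) m) * T (l+2) m - (g l m * T (l+1) m)^2 := by
  unfold T g
  rw [show 2*(m+1)+2*l = 2*m+2*l+1+1 from by ring,
      show 2*(m+1)+1 = 2*m+1+1+1 from by ring,
      show 2*(m+1)+l+1 = 2*m+l+1+1+1 from by ring,
      show 2*(m+1)+l = 2*m+l+1+1 from by ring,
      show 2*m+2*(l+1) = 2*m+2*l+1+1 from by ring,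
      show 2*m+(l+1) = 2*m+l+1 from by ring,
      show 2*(l+1) = 2*l+1+1 from by ring,
      show 2*m+2*(l+2) = 2*m+2*l+1+1+1+1 from by ring,
      show 2*m+(l+2)+1 = 2*m+l+1+1+1 from by ring,
      show 2*m+(l+2) = 2*m+l+1+1 from by ring]

  simp only [fs]
  push_cast
  field_simp
  ring

noncomputable def e0 (n : ℕ) : Fin n ⊕ Fin 1 ≃ Fin (n+1) :=
  Equiv.ofBijective (Sum.elim (fun k => k.succ) fun _ => 0)
    ((Fintype.bijective_iff_injective_and_card _).mpr ⟨by
      intro x y hxy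
      rcases x with k | x <;> rcases y with k' | y <;>
        simp only [Sum.elim_inl, Sum.elim_inr] at hxy
      · exact congrArg Sum.inl (Fin.succ_injective _ hxy)
      · exact absurd hxy (Fin.succ_ne_zero _)
      · exact absurd hxy.symm (Fin.succ_ne_zero _)
      · exact congrArg Sum.inr (Subsingleton.elim _ _), by simp⟩)

noncomputable def eL (n : ℕ) : Fin n ⊕ Fin 1 ≃ Fin (n+1) :=
  Equiv.ofBijective (Sum.elim Fin.castSucc fun _ => Fin.last n)
    ((Fintype.bijective_iff_injective_and_card _).mpr ⟨by
      intro x y hxy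
      rcases x with k | x <;> rcases y with k' | y <;>
        simp only [Sum.elim_inl, Sum.elim_inr] at hxy
      · exact congrArg Sum.inl (Fin.castSucc_injective _ hxy)
      · exact absurd hxy (Fin.ne_last_of_lt (Fin.castSucc_lt_last k))
      · exact absurd hxy.symm (Fin.ne_last_of_lt (Fin.castSucc_lt_last k'))
      · exact congrArg Sum.inr (Subsingleton.elim _ _), by simp⟩)

noncomputable def e2 (n : ℕ) : Fin n ⊕ Fin 2 ≃ Fin (n+2) :=
  Equiv.ofBijective
    (Sum.elim (fun k => k.succ.castSucc) fun b => if b.val = 0 then 0 else Fin.last (n+1))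
    ((Fintype.bijective_iff_injective_and_card _).mpr ⟨by
      intro x y hxy
      rcases x with k | b <;> rcases y with k' | b' <;>
        simp only [Sum.elim_inl, Sum.elim_inr] at hxy
      · have := congrArg Fin.val hxy
        simp only [Fin.coe_castSucc, Fin.val_succ] at this
        exact congrArg Sum.inl (Fin.ext (by omega))
      · have := congrArg Fin.val hxy
        split_ifs at this <;>
          simp only [Fin.coe_castSucc, Fin.val_succ, Fin.val_zero, Fin.val_last] at this <;>
          omega
      · have := congrArg Fin.val hxy
        split_ifs at this <;>
          simp only [Fin.coe_castSucc, Fin.val_succ, Fin.val_zero, Fin.val_last] at this <;>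
          omega
      · have := congrArg Fin.val hxy
        have hb : b.val < 2 := b.isLt
        have hb' : b'.val < 2 := b'.isLt
        split_ifs at this <;>
          simp only [Fin.val_zero, Fin.val_last] at this <;>
          exact congrArg Sum.inr (Fin.ext (by omega)), by simp⟩)

lemma sign_mix {n : ℕ} (A B : Matrix (Fin (n+1)) (Fin (n+1)) ℚ) :
    (A.submatrix (e0 n) (eL n)).det * (B.submatrix (eL n) (e0 n)).det = A.det * B.det := by
  set σ : Equiv.Perm (Fin n ⊕ Fin 1) := (e0 n).trans (eL n).symm with hσ
  have h1 : A.submatrix (e0 n) (eL n) = (A.submatrix (eL n) (eL n)).submatrix σ id := by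
    ext x y
    simp [σ, Matrix.submatrix_apply]
  have h2 : B.submatrix (eL n) (e0 n) = (B.submatrix (e0 n) (e0 n)).submatrix σ.symm id := by
    ext x y
    simp [σ, Matrix.submatrix_apply]
  have hs : ((Equiv.Perm.sign σ : ℤ) : ℚ) * ((Equiv.Perm.sign σ.symm : ℤ) : ℚ) = 1 := by
    have h : Equiv.Perm.sign σ * Equiv.Perm.sign σ.symm = 1 := by
      rw [Equiv.Perm.sign_symm]
      exact Int.units_mul_self _
    rw [← Int.cast_mul, ← Units.val_mul, h, Units.val_one, Int.cast_one]
  rw [h1, h2, Matrix.det_permute, Matrix.det_permute,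
    Matrix.det_submatrix_equiv_self, Matrix.det_submatrix_equiv_self]
  linear_combination (A.det * B.det) * hs


lemma dodgson {n : ℕ} (M : Matrix (Fin (n+2)) (Fin (n+2)) ℚ)
    (hP : (M.submatrix (fun k : Fin n => k.succ.castSucc)
        (fun k : Fin n => k.succ.castSucc)).det ≠ 0) :
    M.det * (M.submatrix (fun k : Fin n => k.succ.castSucc)
        (fun k : Fin n => k.succ.castSucc)).det
      = (M.submatrix Fin.castSucc Fin.castSucc).det * (M.submatrix Fin.succ Fin.succ).det
        - (M.submatrix Fin.castSucc Fin.succ).det * (M.submatrix Fin.succ Fin.castSucc).det := by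
  set c : Fin n → Fin (n+2) := fun k => k.succ.castSucc with hc
  set P : Matrix (Fin n) (Fin n) ℚ := M.submatrix c c with hPdef
  haveI : Invertible P := P.invertibleOfIsUnitDet (isUnit_iff_ne_zero.mpr hP)
  set q : Fin (n+2) → Matrix (Fin n) (Fin 1) ℚ := fun b => Matrix.of fun k _ => M (c k) b with hq
  set r : Fin (n+2) → Matrix (Fin 1) (Fin n) ℚ := fun a => Matrix.of fun _ k => M a (c k) with hr
  set s : Fin (n+2) → Fin (n+2) → Matrix (Fin 1) (Fin 1) ℚ :=
    fun a b => Matrix.of fun _ _ => M a b with hs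
  set H : Fin (n+2) → Fin (n+2) → ℚ := fun a b => (s a b - r a * ⅟P * q b) 0 0 with hH
  have hblock : ∀ a b : Fin (n+2),
      (Matrix.fromBlocks P (q b) (r a) (s a b)).det = P.det * H a b := by
    intro a b
    rw [Matrix.det_fromBlocks₁₁]
    congr 1
    exact Matrix.det_fin_one _
  -- corner minors
  have h00 : (M.submatrix Fin.castSucc Fin.castSucc).det = P.det * H 0 0 := by
    have heq : (M.submatrix Fin.castSucc Fin.castSucc).submatrix (e0 n) (e0 n)
        = Matrix.fromBlocks P (q 0) (r 0) (s 0 0) := by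
      ext x y
      rcases x with k | x <;> rcases y with k' | y <;>
        simp [e0, hPdef, hq, hr, hs, hc, Matrix.submatrix_apply, Fin.succ_castSucc, -Fin.castSucc_succ]
    rw [← Matrix.det_submatrix_equiv_self (e0 n) (M.submatrix Fin.castSucc Fin.castSucc),
      heq, hblock]
  have h11 : (M.submatrix Fin.succ Fin.succ).det
      = P.det * H (Fin.last (n+1)) (Fin.last (n+1)) := by
    have heq : (M.submatrix Fin.succ Fin.succ).submatrix (eL n) (eL n)
        = Matrix.fromBlocks P (q (Fin.last (n+1))) (r (Fin.last (n+1)))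
            (s (Fin.last (n+1)) (Fin.last (n+1))) := by
      ext x y
      rcases x with k | x <;> rcases y with k' | y <;>
        simp [eL, hPdef, hq, hr, hs, hc, Matrix.submatrix_apply, Fin.succ_castSucc, -Fin.castSucc_succ]
    rw [← Matrix.det_submatrix_equiv_self (eL n) (M.submatrix Fin.succ Fin.succ), heq, hblock]
  have h0110 : (M.submatrix Fin.castSucc Fin.succ).det * (M.submatrix Fin.succ Fin.castSucc).det
      = (P.det * H 0 (Fin.last (n+1))) * (P.det * H (Fin.last (n+1)) 0) := by
    have heqB : (M.submatrix Fin.castSucc Fin.succ).submatrix (e0 n) (eL n)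
        = Matrix.fromBlocks P (q (Fin.last (n+1))) (r 0) (s 0 (Fin.last (n+1))) := by
      ext x y
      rcases x with k | x <;> rcases y with k' | y <;>
        simp [e0, eL, hPdef, hq, hr, hs, hc, Matrix.submatrix_apply, Fin.succ_castSucc, -Fin.castSucc_succ]
    have heqC : (M.submatrix Fin.succ Fin.castSucc).submatrix (eL n) (e0 n)
        = Matrix.fromBlocks P (q 0) (r (Fin.last (n+1))) (s (Fin.last (n+1)) 0) := by
      ext x y
      rcases x with k | x <;> rcases y with k' | y <;>
        simp [e0, eL, hPdef, hq, hr, hs, hc, Matrix.submatrix_apply, Fin.succ_castSucc, -Fin.castSucc_succ]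
    rw [← sign_mix (M.submatrix Fin.castSucc Fin.succ) (M.submatrix Fin.succ Fin.castSucc),
      heqB, heqC, hblock, hblock]
  -- full determinant
  set β : Fin 2 → Fin (n+2) := fun b => if b.val = 0 then 0 else Fin.last (n+1) with hβ
  set Q : Matrix (Fin n) (Fin 2) ℚ := Matrix.of fun k b => M (c k) (β b) with hQ
  set R : Matrix (Fin 2) (Fin n) ℚ := Matrix.of fun b k => M (β b) (c k) with hR
  set S : Matrix (Fin 2) (Fin 2) ℚ := Matrix.of fun a b => M (β a) (β b) with hS
  have hX : ∀ b b' : Fin 2, (S - R * ⅟P * Q) b b' = H (β b) (β b') := by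
    intro b b'
    simp [hH, hs, hr, hq, hS, hR, hQ, Matrix.sub_apply, Matrix.mul_apply]
  have hM : M.det = P.det * (H 0 0 * H (Fin.last (n+1)) (Fin.last (n+1))
      - H 0 (Fin.last (n+1)) * H (Fin.last (n+1)) 0) := by
    rw [← Matrix.det_submatrix_equiv_self (e2 n) M]
    have hb : M.submatrix (e2 n) (e2 n) = Matrix.fromBlocks P Q R S := by
      ext x y
      rcases x with k | b <;> rcases y with k' | b' <;>
        simp [e2, hPdef, hQ, hR, hS, hβ, hc, Matrix.submatrix_apply]
    have hβ0 : β 0 = 0 := by simp [hβ]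
    have hβ1 : β 1 = Fin.last (n+1) := by simp [hβ]
    rw [hb, Matrix.det_fromBlocks₁₁, Matrix.det_fin_two, hX, hX, hX, hX, hβ0, hβ1]
  rw [hM, h00, h11, h0110]
  ring

lemma catalan_q (n : ℕ) :
    (catalan n : ℚ) = ((2*n).factorial : ℚ) / ((n.factorial : ℚ) * ((n+1).factorial : ℚ)) := by
  have h1 : Nat.centralBinom n * n.factorial * n.factorial = (2*n).factorial := by
    have h := Nat.choose_mul_factorial_mul_factorial (show n ≤ 2*n by omega)
    rw [show 2*n - n = n from by omega] at h
    exact h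
  have h2 : (n + 1) * catalan n = Nat.centralBinom n := succ_mul_catalan_eq_centralBinom n
  have h3 : ((n:ℚ) + 1) * (catalan n : ℚ) * (n.factorial : ℚ) * (n.factorial : ℚ)
      = ((2*n).factorial : ℚ) := by
    rw [← h1, ← h2]
    push_cast
    ring
  rw [fs n]
  field_simp
  linear_combination h3

lemma base1 : ∀ l : ℕ, F l 1
    = ((2*l).factorial : ℚ) / ((l.factorial : ℚ) * ((l+1).factorial : ℚ)) := by
  intro l
  induction l with
  | zero => unfold F; simp
  | succ l ih =>
      rw [F_succ, ih]
      unfold g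
      rw [show 2*1+2*l = 2*l+1+1 from by ring, show 2*1+l = l+1+1 from by ring,
        show 2*(l+1) = 2*l+1+1 from by ring, show l+1+1 = l+1+1 from rfl]
      simp only [fs]
      push_cast
      field_simp

lemma star (l m : ℕ) : F l (m+2) * F (l+2) m
    = F l (m+1) * F (l+2) (m+1) - F (l+1) (m+1) * F (l+1) (m+1) := by
  have hk := key l m
  have e1 : F l (m+2) = F l m * T l m * T l (m+1) := by
    rw [show m+2 = (m+1)+1 from rfl, FT l (m+1), FT l m]
  have e2 : F (l+2) m = F l m * g l m * g (l+1) m := by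
    rw [show l+2 = (l+1)+1 from rfl, F_succ, F_succ]
  have e3 : F l (m+1) = F l m * T l m := FT l m
  have e4 : F (l+2) (m+1) = F l m * g l m * g (l+1) m * T (l+2) m := by
    rw [FT (l+2) m, e2]
  have e5 : F (l+1) (m+1) = F l m * g l m * T (l+1) m := by
    rw [FT (l+1) m, F_succ]
  rw [e1, e2, e3, e4, e5]
  linear_combination (F l m)^2 * hk

lemma detF (m : ℕ) : ∀ l : ℕ,
    (Matrix.of fun i j : Fin m => (catalan (l + i + j) : ℚ)).det = F l m := by
  induction m using Nat.twoStepInduction with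
  | zero =>
      intro l
      rw [Matrix.det_isEmpty, F_zero_right]
  | one =>
      intro l
      rw [Matrix.det_fin_one]
      simp only [Matrix.of_apply, Fin.val_zero, Nat.add_zero]
      rw [catalan_q, base1]
  | more m ih ih1 =>
      intro l
      set M : Matrix (Fin (m+2)) (Fin (m+2)) ℚ :=
        Matrix.of fun i j : Fin (m+2) => (catalan (l + i + j) : ℚ) with hM
      have hcent : M.submatrix (fun k : Fin m => k.succ.castSucc)
          (fun k : Fin m => k.succ.castSucc)
          = Matrix.of fun i j : Fin m => (catalan ((l+2) + i + j) : ℚ) := by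
        ext i j
        simp only [hM, Matrix.submatrix_apply, Matrix.of_apply, Fin.coe_castSucc, Fin.val_succ]
        rw [show l + (↑i + 1) + (↑j + 1) = l + 2 + ↑i + ↑j from by omega]
      have hcc : M.submatrix Fin.castSucc Fin.castSucc
          = Matrix.of fun i j : Fin (m+1) => (catalan (l + i + j) : ℚ) := by
        ext i j
        simp only [hM, Matrix.submatrix_apply, Matrix.of_apply, Fin.coe_castSucc]
      have hss : M.submatrix Fin.succ Fin.succ
          = Matrix.of fun i j : Fin (m+1) => (catalan ((l+2) + i + j) : ℚ) := by
        ext i j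
        simp only [hM, Matrix.submatrix_apply, Matrix.of_apply, Fin.val_succ]
        rw [show l + (↑i + 1) + (↑j + 1) = l + 2 + ↑i + ↑j from by omega]
      have hcs : M.submatrix Fin.castSucc Fin.succ
          = Matrix.of fun i j : Fin (m+1) => (catalan ((l+1) + i + j) : ℚ) := by
        ext i j
        simp only [hM, Matrix.submatrix_apply, Matrix.of_apply, Fin.coe_castSucc, Fin.val_succ]
        rw [show l + ↑i + (↑j + 1) = l + 1 + ↑i + ↑j from by omega]
      have hsc : M.submatrix Fin.succ Fin.castSucc
          = Matrix.of fun i j : Fin (m+1) => (catalan ((l+1) + i + j) : ℚ) := by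
        ext i j
        simp only [hM, Matrix.submatrix_apply, Matrix.of_apply, Fin.coe_castSucc, Fin.val_succ]
        rw [show l + (↑i + 1) + ↑j = l + 1 + ↑i + ↑j from by omega]
      have hdc : (M.submatrix (fun k : Fin m => k.succ.castSucc)
          (fun k : Fin m => k.succ.castSucc)).det = F (l+2) m := by
        rw [hcent]; exact ih (l+2)
      have hne : (M.submatrix (fun k : Fin m => k.succ.castSucc)
          (fun k : Fin m => k.succ.castSucc)).det ≠ 0 := by
        rw [hdc]; exact (Fpos (l+2) m).ne'
      have hD := dodgson M hne
      rw [hdc, hcc, hss, hcs, hsc, ih1 l, ih1 (l+2), ih1 (l+1)] at hD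
      have hstar := star l m
      have := hD.trans hstar.symm
      exact mul_right_cancel₀ (Fpos (l+2) m).ne' this

lemma asc (a : ℕ) : ∀ j : ℕ,
    (∏ i ∈ Finset.Icc 1 j, ((i : ℚ) + (a : ℚ)))
      = ((a+j).factorial : ℚ) / (a.factorial : ℚ) := by
  intro j
  induction j with
  | zero =>
      rw [show Finset.Icc 1 0 = (∅ : Finset ℕ) from by simp, Finset.prod_empty]
      exact (div_self (fne a)).symm
  | succ j ih =>
      rw [Finset.prod_Icc_succ_top (by omega : 1 ≤ j+1), ih,
        show a+(j+1) = (a+j)+1 from by ring, fs]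
      push_cast
      field_simp
      ring

lemma inner_prod (j m : ℕ) :
    (∏ i ∈ Finset.Icc 1 j, (((i:ℚ) + (j:ℚ) + 2*(m:ℚ)) / ((i:ℚ) + (j:ℚ)))) = g j m := by
  rw [Finset.prod_div_distrib]
  have h1 : (∏ i ∈ Finset.Icc 1 j, ((i:ℚ) + (j:ℚ) + 2*(m:ℚ)))
      = ∏ i ∈ Finset.Icc 1 j, ((i : ℚ) + ((j+2*m : ℕ) : ℚ)) := by
    apply Finset.prod_congr rfl
    intro i _
    push_cast
    ring
  have h2 : (∏ i ∈ Finset.Icc 1 j, ((i:ℚ) + (j:ℚ)))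
      = ∏ i ∈ Finset.Icc 1 j, ((i : ℚ) + ((j : ℕ) : ℚ)) := rfl
  rw [h1, h2, asc (j+2*m) j, asc j j,
    show j+2*m+j = 2*m+2*j from by ring, show j+j = 2*j from by ring]
  unfold g
  rw [show 2*m+j = j+2*m from by ring]
  field_simp

lemma outer_prod (l m : ℕ) (hl : 1 ≤ l) :
    (∏ j ∈ Finset.Icc 1 (l-1), g j m) = F l m := by
  have hr : Finset.range l = insert 0 (Finset.Icc 1 (l-1)) := by
    ext x
    simp only [Finset.mem_range, Finset.mem_insert, Finset.mem_Icc]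
    omega
  unfold F
  rw [hr, Finset.prod_insert (by simp), g_zero, one_mul]

end CatalanHankelAux


/-- Hankel determinant identity of Desainte-Catherine and Viennot: for
`l, m ≥ 1`, the `m × m` determinant `det(c_{l+i+j−2})_{1 ≤ i,j ≤ m}` of
Catalan numbers equals `∏_{1 ≤ i ≤ j ≤ l−1} (i + j + 2m)/(i + j)`. -/
theorem catalan_hankel_det
    (l m : ℕ) (hl : 1 ≤ l) (hm : 1 ≤ m) :
    Matrix.det (Matrix.of fun i j : Fin m => (catalan (l + i + j) : ℚ))
      = ∏ i ∈ Finset.Icc 1 (l - 1), ∏ j ∈ Finset.Icc i (l - 1),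
          (((i : ℚ) + j + 2 * m) / ((i : ℚ) + j)) := by
  rw [CatalanHankelAux.detF m l]
  rw [Finset.prod_comm' (t' := Finset.Icc 1 (l-1)) (s' := fun j => Finset.Icc 1 j)
    (by intro x y; simp only [Finset.mem_Icc]; omega)]
  rw [← CatalanHankelAux.outer_prod l m hl]
  apply Finset.prod_congr rfl
  intro j _
  exact (CatalanHankelAux.inner_prod j m).symm
end

section
/- Let g ≥ 1 and let n ≥ g be an integer with n ≡ g (mod 2); set m = (n − g)/2 and let b₀(n) = det( c_{g+i+j−2} )_{1 ≤ i,j ≤ m} (the determinant of the empty matrix being 1). Then, as rational numbers, b₀(n) = (σ_{n,g}/σ_{g,g}) · ( ∏_{k=1}^{g} (2k − 1) ) / ( ∏_{k=1}^{g} (n − g + 2k − 1) ). -/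
/-- Cantor's quantity `σ_{n,g}`: the product `binom(n+1,3)·binom(n+3,7)⋯
binom(n+g−1,2g−1)` when `g` is even, and `binom(n,1)·binom(n+2,5)⋯
binom(n+g−1,2g−1)` when `g` is odd. -/
def sigmaNG (n g : ℕ) : ℕ :=
  if Even g then
    ∏ k ∈ Finset.Icc 1 (g / 2), Nat.choose (n + 2 * k - 1) (4 * k - 1)
  else
    ∏ k ∈ Finset.Icc 1 ((g + 1) / 2), Nat.choose (n + 2 * k - 2) (4 * k - 3)

open Finset Nat Matrix


/-- ratio `P(g+1,m)/P(g,m)` -/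
def uu (g m : ℕ) : ℚ :=
  ((2*g+2*m)! : ℚ) * (g ! : ℚ) / (((2*g)! : ℚ) * ((g+2*m)! : ℚ))

/-- ratio `P(g,m+1)/P(g,m)` -/
def EE (g m : ℕ) : ℚ :=
  ((2*g+2*m)! : ℚ) * ((2*m+1)! : ℚ) / (((g+2*m)! : ℚ) * ((g+2*m+1)! : ℚ))

/-- `P g m` : the Hankel determinant of Catalan numbers `det (c_{g+i+j})_{0≤i,j<m}`. -/
def PP : ℕ → ℕ → ℚ
  | 0, _ => 1
  | g+1, m => PP g m * uu g m

lemma factQ_pos (n : ℕ) : (0:ℚ) < (n ! : ℚ) := by exact_mod_cast n.factorial_pos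

lemma factQ_ne (n : ℕ) : ((n ! : ℕ) : ℚ) ≠ 0 := (factQ_pos n).ne'

lemma fq (x : ℕ) : ((x+1)! : ℚ) = ((x:ℚ)+1) * ((x)! : ℚ) := by
  push_cast [Nat.factorial_succ]; ring

lemma uu_pos (g m : ℕ) : 0 < uu g m := by
  unfold uu; positivity

lemma EE_pos (g m : ℕ) : 0 < EE g m := by
  unfold EE; positivity

lemma PP_pos (g m : ℕ) : 0 < PP g m := by
  induction g with
  | zero => norm_num [PP]
  | succ g ih => exact mul_pos ih (uu_pos g m)

lemma uu_zero (g : ℕ) : uu g 0 = 1 := by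
  unfold uu
  rw [show 2*g+2*0 = 2*g from by ring, show g+2*0 = g from by ring]
  rw [div_self]
  positivity

lemma PP_zero (g : ℕ) : PP g 0 = 1 := by
  induction g with
  | zero => rfl
  | succ g ih => rw [PP, ih, uu_zero, one_mul]

lemma catalanQ (g : ℕ) : (catalan g : ℚ) = ((2*g)! : ℚ) / ((g ! : ℚ) * ((g+1)! : ℚ)) := by
  have h1 : (g+1) * catalan g = Nat.centralBinom g := succ_mul_catalan_eq_centralBinom g
  have h2 : Nat.centralBinom g * g ! * g ! = (2*g)! := by
    have := Nat.choose_mul_factorial_mul_factorial (show g ≤ 2*g by omega)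
    rw [Nat.centralBinom]
    rw [show 2*g - g = g from by omega] at this
    exact this
  have hnat : ((g+1) * catalan g) * g ! * g ! = (2*g)! := by rw [h1]; exact h2
  have h3 : ((g:ℚ)+1) * (catalan g : ℚ) * (g ! : ℚ) * (g ! : ℚ) = ((2*g)! : ℚ) := by
    exact_mod_cast hnat
  rw [fq]
  have hg1 := factQ_ne g
  field_simp
  linear_combination h3

lemma PP_one (g : ℕ) : PP g 1 = (catalan g : ℚ) := by
  induction g with
  | zero => simp [PP, catalan_zero]
  | succ g ih =>
    rw [PP, ih, catalanQ, catalanQ]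
    unfold uu
    rw [show 2*g+2*1 = 2*g+1+1 from by ring, show g+2*1 = g+1+1 from by ring,
        show 2*(g+1) = 2*g+1+1 from by ring]
    simp only [fq]
    push_cast
    have h1 := factQ_ne g
    have h2 := factQ_ne (2*g)
    field_simp

lemma EE_zero_g (m : ℕ) : EE 0 m = 1 := by
  unfold EE
  simp only [Nat.mul_zero, Nat.zero_add, mul_zero, zero_add]
  rw [div_self (by positivity)]

lemma PP_shift (g m : ℕ) : PP g (m+1) = PP g m * EE g m := by
  induction g with
  | zero =>
    show (1:ℚ) = 1 * EE 0 m
    rw [EE_zero_g, mul_one]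
  | succ g ih =>
    rw [PP, PP, ih]
    have key : EE g m * uu g (m+1) = uu g m * EE (g+1) m := by
      unfold EE uu
      rw [show 2*g+2*(m+1) = 2*g+2*m+2 from by ring,
          show g+2*(m+1) = g+2*m+2 from by ring,
          show 2*(g+1)+2*m = 2*g+2*m+2 from by ring,
          show g+1+2*m = g+2*m+1 from by ring,
          show g+2*m+1+1 = g+2*m+2 from by ring]
      ring
    rw [mul_assoc, key, ← mul_assoc]

/-- the scalar identity behind the Dodgson-condensation recurrence for `PP` -/
lemma scalar_dj (g m : ℕ) :
    EE g (m+1) * uu g m * uu (g+1) m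
      = EE g m * uu g (m+1) * (uu (g+1) (m+1) - uu g (m+1)) := by
  unfold EE uu
  rw [show 2*(g+1)+2*(m+1) = 2*g+2*m+1+1+1+1 from by ring,
      show g+1+2*(m+1) = g+2*m+1+1+1 from by ring,
      show g+2*(m+1)+1 = g+2*m+1+1+1 from by ring,
      show 2*g+2*(m+1) = 2*g+2*m+1+1 from by ring,
      show g+2*(m+1) = g+2*m+1+1 from by ring,
      show 2*(m+1)+1 = 2*m+1+1+1 from by ring,
      show 2*(g+1)+2*m = 2*g+2*m+1+1 from by ring,
      show 2*(g+1) = 2*g+1+1 from by ring,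
      show g+1+2*m = g+2*m+1 from by ring]
  simp only [fq]
  push_cast
  have h1 := factQ_ne g
  have h2 := factQ_ne (2*g)
  have h3 := factQ_ne (g+2*m)
  have h4 := factQ_ne (2*g+2*m)
  have h5 := factQ_ne (2*m)
  field_simp
  ring

/-- Dodgson-condensation recurrence for `PP`. -/
lemma PP_dj (g m : ℕ) :
    PP g (m+2) * PP (g+2) m
      = PP g (m+1) * PP (g+2) (m+1) - PP (g+1) (m+1) * PP (g+1) (m+1) := by
  have e1 : PP (g+2) m = PP g m * uu g m * uu (g+1) m := by
    rw [PP, PP]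
  have e2 : PP g (m+2) = PP g m * EE g m * EE g (m+1) := by
    rw [PP_shift, PP_shift]
  have e3 : PP g (m+1) = PP g m * EE g m := PP_shift g m
  have e4 : PP (g+2) (m+1) = PP g m * EE g m * uu g (m+1) * uu (g+1) (m+1) := by
    rw [PP, PP, PP_shift]
  have e5 : PP (g+1) (m+1) = PP g m * EE g m * uu g (m+1) := by
    rw [PP, PP_shift]
  rw [e1, e2, e3, e4, e5]
  linear_combination (PP g m * PP g m * EE g m) * scalar_dj g m


def HM (g m : ℕ) : Matrix (Fin m) (Fin m) ℚ :=
  Matrix.of fun i j => (catalan (g + i + j) : ℚ)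

def HK (g m : ℕ) : ℚ := (HM g m).det

lemma catc {a b : ℕ} (h : a = b) : (catalan a : ℚ) = catalan b := by rw [h]

/-- `Fin k ⊕ Fin 2 ≃ Fin (k+2)` sending the two extra points to the two ends. -/
def emb2 (k : ℕ) : Fin k ⊕ Fin 2 ≃ Fin (k+2) where
  toFun := Sum.elim (fun i => ⟨(i:ℕ)+1, by have := i.isLt; omega⟩)
    (fun u => ⟨(u:ℕ)*(k+1), by rcases u with ⟨uv, hu⟩; simp only [Fin.val_mk]; interval_cases uv <;> omega⟩)
  invFun p :=
    if h0 : (p:ℕ) = 0 then .inr 0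
    else if h1 : (p:ℕ) ≤ k then .inl ⟨(p:ℕ)-1, by have := p.isLt; omega⟩ else .inr 1
  left_inv := by
    rintro (i | ⟨uv, hu⟩)
    · have hi := i.isLt
      dsimp only [Sum.elim_inl, Fin.val_mk]
      rw [dif_neg (by omega), dif_pos (by omega)]
      simp only [Sum.inl.injEq]
      exact Fin.ext (by simp only [Fin.val_mk]; omega)
    · interval_cases uv
      · dsimp only [Sum.elim_inr, Fin.val_mk]
        rw [dif_pos (by simp)]
        exact congrArg Sum.inr (Fin.ext rfl)
      · dsimp only [Sum.elim_inr, Fin.val_mk]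
        rw [dif_neg (by simp), dif_neg (by simp)]
        exact congrArg Sum.inr (Fin.ext rfl)
  right_inv := by
    rintro ⟨p, hp⟩
    simp only [Fin.val_mk]
    by_cases h0 : p = 0
    · rw [dif_pos h0]
      simp only [Sum.elim_inr]
      exact Fin.ext (by simp [h0])
    · by_cases h1 : p ≤ k
      · rw [dif_neg h0, dif_pos h1]
        simp only [Sum.elim_inl]
        exact Fin.ext (by simp only [Fin.val_mk]; omega)
      · rw [dif_neg h0, dif_neg h1]
        simp only [Sum.elim_inr]
        exact Fin.ext (by simp; omega)

/-- `Fin k ⊕ Fin 1 ≃ Fin (k+1)` sending the extra point to `0`. -/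
def emb0 (k : ℕ) : Fin k ⊕ Fin 1 ≃ Fin (k+1) where
  toFun := Sum.elim (fun i => ⟨(i:ℕ)+1, by have := i.isLt; omega⟩) (fun _ => ⟨0, by omega⟩)
  invFun p := if h : (p:ℕ) = 0 then .inr 0
    else .inl ⟨(p:ℕ)-1, by have := p.isLt; omega⟩
  left_inv := by
    rintro (i | ⟨uv, hu⟩)
    · dsimp only [Sum.elim_inl, Fin.val_mk]
      rw [dif_neg (by omega)]
      simp only [Sum.inl.injEq]
      exact Fin.ext (by simp only [Fin.val_mk]; omega)
    · interval_cases uv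
      dsimp only [Sum.elim_inr, Fin.val_mk]
      rw [dif_pos rfl]
      exact congrArg Sum.inr (Subsingleton.elim _ _)
  right_inv := by
    rintro ⟨p, hp⟩
    simp only [Fin.val_mk]
    by_cases h0 : p = 0
    · rw [dif_pos h0]
      simp only [Sum.elim_inr]
      exact Fin.ext (by simp [h0])
    · rw [dif_neg h0]
      simp only [Sum.elim_inl]
      exact Fin.ext (by simp only [Fin.val_mk]; omega)

/-- `Fin k ⊕ Fin 1 ≃ Fin (k+1)` sending the extra point to `k`. -/
def embE (k : ℕ) : Fin k ⊕ Fin 1 ≃ Fin (k+1) where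
  toFun := Sum.elim (fun i => ⟨(i:ℕ), by have := i.isLt; omega⟩) (fun _ => ⟨k, by omega⟩)
  invFun p := if h : (p:ℕ) < k then .inl ⟨(p:ℕ), h⟩ else .inr 0
  left_inv := by
    rintro (i | ⟨uv, hu⟩)
    · have hi := i.isLt
      dsimp only [Sum.elim_inl, Fin.val_mk]
      rw [dif_pos (by omega)]
    · interval_cases uv
      dsimp only [Sum.elim_inr, Fin.val_mk]
      rw [dif_neg (by omega)]
      exact congrArg Sum.inr (Subsingleton.elim _ _)
  right_inv := by
    rintro ⟨p, hp⟩
    simp only [Fin.val_mk]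
    by_cases h0 : p < k
    · rw [dif_pos h0]
      simp only [Sum.elim_inl]
    · rw [dif_neg h0]
      simp only [Sum.elim_inr]
      exact Fin.ext (by simp only [Fin.val_mk]; omega)

lemma sq_det {I J : Type*} [Fintype I] [DecidableEq I] [Fintype J] [DecidableEq J]
    (A : Matrix J J ℚ) (f f' : I ≃ J) :
    (A.submatrix f f').det * (A.submatrix f' f).det = A.det * A.det := by
  have h1 : A.submatrix f f' = (A.submatrix f f).submatrix id ⇑(f'.trans f.symm) := by
    ext i j; simp
  have h2 : A.submatrix f' f = (A.submatrix f f).submatrix ⇑(f'.trans f.symm) id := by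
    ext i j; simp
  rw [h1, h2, Matrix.det_permute' (f'.trans f.symm), Matrix.det_permute (f'.trans f.symm),
    Matrix.det_submatrix_equiv_self]
  rcases Int.units_eq_one_or (Equiv.Perm.sign (f'.trans f.symm)) with h | h <;> rw [h] <;>
    push_cast <;> ring


/-- Desnanot–Jacobi in block form. -/
lemma dj_blocks {k : ℕ} (M : Matrix (Fin k) (Fin k) ℚ) (B : Matrix (Fin k) (Fin 2) ℚ)
    (C : Matrix (Fin 2) (Fin k) ℚ) (D : Matrix (Fin 2) (Fin 2) ℚ) (hM : IsUnit M.det) :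
    (Matrix.fromBlocks M B C D).det * M.det =
      (Matrix.fromBlocks M (Matrix.of fun i (_ : Fin 1) => B i 0)
          (Matrix.of fun (_ : Fin 1) j => C 0 j) (Matrix.of fun _ _ => D 0 0)).det *
      (Matrix.fromBlocks M (Matrix.of fun i (_ : Fin 1) => B i 1)
          (Matrix.of fun (_ : Fin 1) j => C 1 j) (Matrix.of fun _ _ => D 1 1)).det -
      (Matrix.fromBlocks M (Matrix.of fun i (_ : Fin 1) => B i 1)
          (Matrix.of fun (_ : Fin 1) j => C 0 j) (Matrix.of fun _ _ => D 0 1)).det *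
      (Matrix.fromBlocks M (Matrix.of fun i (_ : Fin 1) => B i 0)
          (Matrix.of fun (_ : Fin 1) j => C 1 j) (Matrix.of fun _ _ => D 1 0)).det := by
  letI := M.invertibleOfIsUnitDet hM
  rw [Matrix.det_fromBlocks₁₁, Matrix.det_fromBlocks₁₁, Matrix.det_fromBlocks₁₁,
      Matrix.det_fromBlocks₁₁, Matrix.det_fromBlocks₁₁]
  rw [Matrix.det_fin_two]
  simp only [Matrix.det_fin_one, Matrix.sub_apply, Matrix.mul_apply, Matrix.of_apply,
    Finset.sum_mul, Finset.mul_sum]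
  ring


lemma emb2_inl (k : ℕ) (i : Fin k) : ((emb2 k (Sum.inl i)) : ℕ) = (i:ℕ)+1 := rfl
lemma emb2_inr (k : ℕ) (u : Fin 2) : ((emb2 k (Sum.inr u)) : ℕ) = (u:ℕ)*(k+1) := rfl
lemma emb0_inl (k : ℕ) (i : Fin k) : ((emb0 k (Sum.inl i)) : ℕ) = (i:ℕ)+1 := rfl
lemma emb0_inr (k : ℕ) (u : Fin 1) : ((emb0 k (Sum.inr u)) : ℕ) = 0 := rfl
lemma embE_inl (k : ℕ) (i : Fin k) : ((embE k (Sum.inl i)) : ℕ) = (i:ℕ) := rfl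
lemma embE_inr (k : ℕ) (u : Fin 1) : ((embE k (Sum.inr u)) : ℕ) = k := rfl

lemma EE_def (g m : ℕ) : EE g m
  = (((2*g+2*m)! :ℕ) : ℚ) * (((2*m+1)! :ℕ) : ℚ) / ((((g+2*m)! :ℕ) : ℚ) * (((g+2*m+1)! :ℕ) : ℚ)) := rfl

lemma hankel_dj (g k : ℕ) (h : HK (g+2) k ≠ 0) :
    HK g (k+2) * HK (g+2) k
      = HK g (k+1) * HK (g+2) (k+1) - HK (g+1) (k+1) * HK (g+1) (k+1) := by
  set M : Matrix (Fin k) (Fin k) ℚ := HM (g+2) k with hMdef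
  set B : Matrix (Fin k) (Fin 2) ℚ :=
    Matrix.of (fun i u => (catalan (g+1+(i:ℕ)+(u:ℕ)*(k+1)) : ℚ)) with hBdef
  set C : Matrix (Fin 2) (Fin k) ℚ :=
    Matrix.of (fun u j => (catalan (g+1+(u:ℕ)*(k+1)+(j:ℕ)) : ℚ)) with hCdef
  set D : Matrix (Fin 2) (Fin 2) ℚ :=
    Matrix.of (fun u v => (catalan (g+(u:ℕ)*(k+1)+(v:ℕ)*(k+1)) : ℚ)) with hDdef
  have hMdet : M.det = HK (g+2) k := rfl
  have hbig : HK g (k+2) = (Matrix.fromBlocks M B C D).det := by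
    rw [HK, ← Matrix.det_submatrix_equiv_self (emb2 k) (HM g (k+2))]
    congr 1
    ext x y
    rcases x with i | u <;> rcases y with j | v <;>
      simp only [Matrix.submatrix_apply, HM, Matrix.of_apply, hMdef, hBdef, hCdef, hDdef,
        Matrix.fromBlocks_apply₁₁, Matrix.fromBlocks_apply₁₂, Matrix.fromBlocks_apply₂₁,
        Matrix.fromBlocks_apply₂₂, emb2_inl, emb2_inr] <;>
      exact catc (by ring)
  have m00 : (Matrix.fromBlocks M (Matrix.of fun i (_ : Fin 1) => B i 0)
        (Matrix.of fun (_ : Fin 1) j => C 0 j) (Matrix.of fun _ _ => D 0 0)).det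
      = HK g (k+1) := by
    rw [HK, ← Matrix.det_submatrix_equiv_self (emb0 k) (HM g (k+1))]
    congr 1
    ext x y
    rcases x with i | u <;> rcases y with j | v <;>
      simp only [Matrix.submatrix_apply, HM, Matrix.of_apply, hMdef, hBdef, hCdef, hDdef,
        Matrix.fromBlocks_apply₁₁, Matrix.fromBlocks_apply₁₂, Matrix.fromBlocks_apply₂₁,
        Matrix.fromBlocks_apply₂₂, emb0_inl, emb0_inr, Fin.val_zero, Fin.val_one] <;>
      exact catc (by ring)
  have m11 : (Matrix.fromBlocks M (Matrix.of fun i (_ : Fin 1) => B i 1)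
        (Matrix.of fun (_ : Fin 1) j => C 1 j) (Matrix.of fun _ _ => D 1 1)).det
      = HK (g+2) (k+1) := by
    rw [HK, ← Matrix.det_submatrix_equiv_self (embE k) (HM (g+2) (k+1))]
    congr 1
    ext x y
    rcases x with i | u <;> rcases y with j | v <;>
      simp only [Matrix.submatrix_apply, HM, Matrix.of_apply, hMdef, hBdef, hCdef, hDdef,
        Matrix.fromBlocks_apply₁₁, Matrix.fromBlocks_apply₁₂, Matrix.fromBlocks_apply₂₁,
        Matrix.fromBlocks_apply₂₂, embE_inl, embE_inr, Fin.val_zero, Fin.val_one] <;>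
      exact catc (by ring)
  have m01 : (Matrix.fromBlocks M (Matrix.of fun i (_ : Fin 1) => B i 1)
        (Matrix.of fun (_ : Fin 1) j => C 0 j) (Matrix.of fun _ _ => D 0 1)).det
      = ((HM (g+1) (k+1)).submatrix (emb0 k) (embE k)).det := by
    congr 1
    ext x y
    rcases x with i | u <;> rcases y with j | v <;>
      simp only [Matrix.submatrix_apply, HM, Matrix.of_apply, hMdef, hBdef, hCdef, hDdef,
        Matrix.fromBlocks_apply₁₁, Matrix.fromBlocks_apply₁₂, Matrix.fromBlocks_apply₂₁,
        Matrix.fromBlocks_apply₂₂, emb0_inl, emb0_inr, embE_inl, embE_inr,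
        Fin.val_zero, Fin.val_one] <;>
      exact catc (by ring)
  have m10 : (Matrix.fromBlocks M (Matrix.of fun i (_ : Fin 1) => B i 0)
        (Matrix.of fun (_ : Fin 1) j => C 1 j) (Matrix.of fun _ _ => D 1 0)).det
      = ((HM (g+1) (k+1)).submatrix (embE k) (emb0 k)).det := by
    congr 1
    ext x y
    rcases x with i | u <;> rcases y with j | v <;>
      simp only [Matrix.submatrix_apply, HM, Matrix.of_apply, hMdef, hBdef, hCdef, hDdef,
        Matrix.fromBlocks_apply₁₁, Matrix.fromBlocks_apply₁₂, Matrix.fromBlocks_apply₂₁,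
        Matrix.fromBlocks_apply₂₂, emb0_inl, emb0_inr, embE_inl, embE_inr,
        Fin.val_zero, Fin.val_one] <;>
      exact catc (by ring)
  have hdj := dj_blocks M B C D (isUnit_iff_ne_zero.mpr (by rw [hMdet]; exact h))
  rw [hbig, ← hMdet, hdj, m00, m11, m01, m10, sq_det (HM (g+1) (k+1)) (emb0 k) (embE k)]
  rfl

lemma sigma_step (n g : ℕ) :
    sigmaNG n (g+2) = sigmaNG n g * Nat.choose (n+g+1) (2*g+3) := by
  rcases Nat.even_or_odd g with hg | hg
  · obtain ⟨t, rfl⟩ := hg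
    have h1 : Even (t+t) := ⟨t, rfl⟩
    have h2 : Even (t+t+2) := ⟨t+1, by ring⟩
    rw [sigmaNG, sigmaNG, if_pos h1, if_pos h2,
      show (t+t+2)/2 = t+1 from by omega, show (t+t)/2 = t from by omega,
      Finset.prod_Icc_succ_top (by omega)]
    congr 1
    congr 1 <;> omega
  · obtain ⟨t, rfl⟩ := hg
    have h1 : ¬ Even (2*t+1) := by rw [Nat.even_iff]; omega
    have h2 : ¬ Even (2*t+1+2) := by rw [Nat.even_iff]; omega
    rw [sigmaNG, sigmaNG, if_neg h1, if_neg h2,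
      show (2*t+1+2+1)/2 = (t+1)+1 from by omega, show (2*t+1+1)/2 = t+1 from by omega,
      Finset.prod_Icc_succ_top (by omega)]
    congr 1
    congr 1 <;> omega

lemma sigma_pos (n g : ℕ) (h : g ≤ n) : 0 < sigmaNG n g := by
  rw [sigmaNG]
  split_ifs with he
  · apply Finset.prod_pos
    intro k hk
    rw [Finset.mem_Icc] at hk
    exact Nat.choose_pos (by omega)
  · apply Finset.prod_pos
    intro k hk
    rw [Finset.mem_Icc] at hk
    exact Nat.choose_pos (by omega)

lemma sigma_zero (n : ℕ) : sigmaNG n 0 = 1 := by simp [sigmaNG]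

lemma sigma_one (n : ℕ) : sigmaNG n 1 = n := by
  rw [sigmaNG, if_neg (by simp)]
  norm_num

lemma sigma_keyQ : ∀ g n, g ≤ n →
    (sigmaNG (n+2) g : ℚ) * ((n !:ℕ) : ℚ) * (((n+1)! :ℕ) : ℚ)
      = (sigmaNG n g : ℚ) * (((n+g+1)! :ℕ) : ℚ) * (((n-g)! :ℕ) : ℚ)
  | 0, n, h => by
    rw [sigma_zero, sigma_zero, show n+0+1 = n+1 from by ring, show n-0 = n from rfl]
    ring
  | 1, n, h => by
    rw [sigma_one, sigma_one, show n+1+1 = n+2 from by ring]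
    have h1 : ((n+2)! :ℕ) = (n+2) * (n+1)! := Nat.factorial_succ (n+1)
    have h2 : n * (n-1)! = n ! := Nat.mul_factorial_pred (by omega)
    push_cast [h1, ← h2]
    ring
  | (g+2), n, h => by
    have IH := sigma_keyQ g n (by omega)
    have hc : (Nat.choose (n+g+3) (2*g+3) : ℚ) * ((((n+g+1)!:ℕ) : ℚ) * (((n-g)! :ℕ) : ℚ))
        = (Nat.choose (n+g+1) (2*g+3) : ℚ) * ((((n+g+3)!:ℕ) : ℚ) * (((n-g-2)! :ℕ) : ℚ)) := by
      rw [Nat.cast_choose ℚ (show 2*g+3 ≤ n+g+3 from by omega),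
          Nat.cast_choose ℚ (show 2*g+3 ≤ n+g+1 from by omega),
          show n+g+3-(2*g+3) = n-g from by omega,
          show n+g+1-(2*g+3) = n-g-2 from by omega]
      have e1 := factQ_pos (2*g+3)
      have e2 := factQ_pos (n-g)
      have e3 := factQ_pos (n-g-2)
      field_simp
    rw [sigma_step (n+2) g, sigma_step n g,
        show n+2+g+1 = n+g+3 from by ring, show n+(g+2)+1 = n+g+3 from by ring,
        show n-(g+2) = n-g-2 from by omega]
    push_cast
    push_cast at IH hc
    linear_combination ((Nat.choose (n+g+3) (2*g+3) : ℚ)) * IH + (sigmaNG n g : ℚ) * hc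

lemma HK_zero (g : ℕ) : HK g 0 = 1 := Matrix.det_fin_zero

lemma HK_one (g : ℕ) : HK g 1 = (catalan g : ℚ) := by
  rw [HK, Matrix.det_fin_one]
  simp [HM]

lemma HK_eq_PP (m g : ℕ) : HK g m = PP g m := by
  induction m using Nat.strong_induction_on generalizing g with
  | _ m ih =>
    rcases m with _ | m
    · rw [HK_zero, PP_zero]
    rcases m with _ | k
    · rw [HK_one, PP_one]
    · show HK g (k+2) = PP g (k+2)
      have h0 : HK (g+2) k = PP (g+2) k := ih k (by omega) (g+2)
      have h1 : HK g (k+1) = PP g (k+1) := ih (k+1) (by omega) g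
      have h2 : HK (g+1) (k+1) = PP (g+1) (k+1) := ih (k+1) (by omega) (g+1)
      have h3 : HK (g+2) (k+1) = PP (g+2) (k+1) := ih (k+1) (by omega) (g+2)
      have hnz : HK (g+2) k ≠ 0 := by rw [h0]; exact (PP_pos _ _).ne'
      have key : HK g (k+2) * HK (g+2) k = PP g (k+2) * PP (g+2) k := by
        rw [hankel_dj g k hnz, h1, h2, h3]
        exact (PP_dj g k).symm
      rw [h0] at key
      exact mul_right_cancel₀ (PP_pos (g+2) k).ne' key

lemma tele (g m : ℕ) :
    (∏ k ∈ Finset.Icc 1 g, (2*((m:ℚ)+1)+2*(k:ℚ)-1)) * (2*(m:ℚ)+1)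
      = (∏ k ∈ Finset.Icc 1 g, (2*(m:ℚ)+2*(k:ℚ)-1)) * (2*(m:ℚ)+2*(g:ℚ)+1) := by
  induction g with
  | zero => simp
  | succ g ih =>
    rw [Finset.prod_Icc_succ_top (by omega), Finset.prod_Icc_succ_top (by omega)]
    push_cast
    linear_combination (2*(m:ℚ)+2*(g:ℚ)+3) * ih

lemma prodA_pos (g m : ℕ) : (0:ℚ) < ∏ k ∈ Finset.Icc 1 g, (2*(m:ℚ)+2*(k:ℚ)-1) := by
  apply Finset.prod_pos
  intro k hk
  rw [Finset.mem_Icc] at hk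
  have : (1:ℚ) ≤ (k:ℚ) := by exact_mod_cast hk.1
  nlinarith [Nat.cast_nonneg (α := ℚ) m]

lemma main2 (g : ℕ) : ∀ m, (sigmaNG (g+2*m) g : ℚ) * (∏ k ∈ Finset.Icc 1 g, (2*(k:ℚ)-1))
    = (sigmaNG g g : ℚ) * (∏ k ∈ Finset.Icc 1 g, (2*(m:ℚ)+2*(k:ℚ)-1)) * PP g m := by
  intro m
  induction m with
  | zero =>
    rw [show g+2*0 = g from by ring, PP_zero, mul_one]
    congr 1
    apply Finset.prod_congr rfl
    intro k _
    push_cast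
    ring
  | succ m ih =>
    have hk := sigma_keyQ g (g+2*m) (by omega)
    rw [show g+2*m+2 = g+2*(m+1) from by ring, show g+2*m+g+1 = 2*g+2*m+1 from by ring,
        show g+2*m-g = 2*m from by omega] at hk
    -- note: keep factorial args in a canonical shape
    have hS' : (sigmaNG (g+2*(m+1)) g : ℚ)
        = (sigmaNG (g+2*m) g : ℚ) * (((2*g+2*m+1)! :ℕ) : ℚ) * (((2*m)! :ℕ) : ℚ)
          / ((((g+2*m)! :ℕ) : ℚ) * (((g+2*m+1)! :ℕ) : ℚ)) := by
      rw [eq_div_iff (by positivity)]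
      linear_combination hk
    have hA' : (∏ k ∈ Finset.Icc 1 g, (2*((m:ℚ)+1)+2*(k:ℚ)-1))
        = (∏ k ∈ Finset.Icc 1 g, (2*(m:ℚ)+2*(k:ℚ)-1)) * (2*(m:ℚ)+2*(g:ℚ)+1) / (2*(m:ℚ)+1) := by
      rw [eq_div_iff (by positivity)]
      exact tele g m
    have hP : PP g m = (sigmaNG (g+2*m) g : ℚ) * (∏ k ∈ Finset.Icc 1 g, (2*(k:ℚ)-1))
        / ((sigmaNG g g : ℚ) * (∏ k ∈ Finset.Icc 1 g, (2*(m:ℚ)+2*(k:ℚ)-1))) := by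
      rw [eq_div_iff (mul_pos (show (0:ℚ) < (sigmaNG g g : ℚ) from by
          exact_mod_cast sigma_pos g g le_rfl) (prodA_pos g m)).ne']
      linear_combination -ih
    simp only [Nat.cast_add, Nat.cast_one]
    rw [PP_shift, hS', hA', hP, EE_def]
    rw [fq (2*g+2*m), fq (2*m)]
    have n1 : (0:ℚ) < (sigmaNG g g : ℚ) := by exact_mod_cast sigma_pos g g le_rfl
    have n2 := prodA_pos g m
    have n3 := factQ_pos (g+2*m)
    have n4 := factQ_pos (g+2*m+1)
    have n5 := factQ_pos (2*g+2*m)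
    have n6 := factQ_pos (2*m)
    have n7 : (0:ℚ) < 2*(m:ℚ)+1 := by positivity
    have n2' := n2.ne'
    generalize (∏ k ∈ Finset.Icc 1 g, (2*(m:ℚ)+2*(k:ℚ)-1)) = P at n2 n2' ⊢
    field_simp
    push_cast
    ring

/-- For `n ≥ g ≥ 1` with `n ≡ g (mod 2)` and `m = (n−g)/2`, the Hankel
determinant `b₀(n) = det(c_{g+i+j−2})_{1 ≤ i,j ≤ m}` of Catalan numbers
equals `(σ_{n,g}/σ_{g,g}) · (∏_{k=1}^g (2k−1)) / (∏_{k=1}^g (n−g+2k−1))`. -/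
theorem b_zero_even_case
    (g n : ℕ) (hg : 1 ≤ g) (hn : g ≤ n) (hpar : n % 2 = g % 2) :
    Matrix.det (Matrix.of fun i j : Fin ((n - g) / 2) =>
        (catalan (g + i + j) : ℚ))
      = ((sigmaNG n g : ℚ) / (sigmaNG g g : ℚ))
          * (∏ k ∈ Finset.Icc 1 g, (2 * (k : ℚ) - 1))
          / (∏ k ∈ Finset.Icc 1 g, ((n : ℚ) - (g : ℚ) + 2 * (k : ℚ) - 1)) := by
  obtain ⟨m, rfl⟩ : ∃ m, n = g + 2*m := ⟨(n-g)/2, by omega⟩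
  rw [show (g+2*m-g)/2 = m from by omega]
  have hdet : Matrix.det (Matrix.of fun i j : Fin m => (catalan (g + i + j) : ℚ)) = PP g m :=
    HK_eq_PP m g
  rw [hdet]
  have hD : (∏ k ∈ Finset.Icc 1 g, (((g+2*m:ℕ) : ℚ) - (g : ℚ) + 2 * (k : ℚ) - 1))
      = ∏ k ∈ Finset.Icc 1 g, (2*(m:ℚ)+2*(k:ℚ)-1) := by
    apply Finset.prod_congr rfl
    intro k _
    push_cast
    ring
  rw [hD]
  have h2 := main2 g m
  have n1 : ((sigmaNG g g : ℕ) : ℚ) ≠ 0 := by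
    have h := sigma_pos g g le_rfl
    have : (0:ℚ) < ((sigmaNG g g : ℕ) : ℚ) := by exact_mod_cast h
    exact this.ne'
  have n2 := (prodA_pos g m).ne'
  rw [div_mul_eq_mul_div, div_div, eq_div_iff (mul_ne_zero n1 n2)]
  linear_combination -h2
end

section
/- Let g ≥ 1 and let n ≥ g + 1 be an integer with n ≡ g + 1 (mod 2); set m = (n − g − 1)/2 and let b₀(n) = det( c_{g+i+j−1} )_{1 ≤ i,j ≤ m} (the determinant of the empty matrix being 1). Then, as rational numbers, b₀(n) = (σ_{n,g}/σ_{g,g}) · 2^{−g}. -/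
open Finset

namespace CatHankelAux

/-- factorial as a rational -/
def Qf (n : ℕ) : ℚ := (Nat.factorial n : ℚ)

lemma Qf_pos (n : ℕ) : 0 < Qf n := by
  unfold Qf; exact_mod_cast Nat.factorial_pos n

lemma Qf_ne (n : ℕ) : Qf n ≠ 0 := (Qf_pos n).ne'

lemma Qf_succ (n : ℕ) : Qf (n + 1) = (n + 1 : ℚ) * Qf n := by
  unfold Qf; rw [Nat.factorial_succ]; push_cast; ring

lemma Qf_add_two (n : ℕ) : Qf (n + 2) = ((n + 1 : ℚ) * (n + 2)) * Qf n := by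
  have h1 : n + 2 = (n + 1) + 1 := rfl
  rw [h1, Qf_succ, Qf_succ]; push_cast; ring

/-- the factor `T j M = (2j+2M)! j! / ((j+2M)! (2j)!)` -/
def T (j M : ℕ) : ℚ := (Qf (2*j+2*M) * Qf j) / (Qf (j+2*M) * Qf (2*j))

lemma T_pos (j M : ℕ) : 0 < T j M :=
  div_pos (mul_pos (Qf_pos _) (Qf_pos _)) (mul_pos (Qf_pos _) (Qf_pos _))

lemma T_zero (j : ℕ) : T j 0 = 1 := by
  unfold T
  norm_num
  rw [div_eq_one_iff_eq (mul_pos (Qf_pos _) (Qf_pos _)).ne']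
  ring

/-- the vertical ratio factor -/
def f (M j : ℕ) : ℚ := (((2*j+2*M+1)*(2*j+2*M+2) : ℕ) : ℚ) / (((j+2*M+1)*(j+2*M+2) : ℕ) : ℚ)

lemma f_pos (M j : ℕ) : 0 < f M j := by
  unfold f
  have h1 : (0:ℚ) < (((2*j+2*M+1)*(2*j+2*M+2) : ℕ) : ℚ) := by positivity
  have h2 : (0:ℚ) < (((j+2*M+1)*(j+2*M+2) : ℕ) : ℚ) := by positivity
  exact div_pos h1 h2

lemma T_vert (j M : ℕ) : T j (M+1) = T j M * f M j := by
  unfold T f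
  have e1 : 2*j+2*(M+1) = (2*j+2*M) + 2 := by ring
  have e2 : j+2*(M+1) = (j+2*M) + 2 := by ring
  rw [e1, e2, Qf_add_two, Qf_add_two]
  have h1 := Qf_ne (2*j+2*M)
  have h2 := Qf_ne (j+2*M)
  have h3 := Qf_ne j
  have h4 := Qf_ne (2*j)
  field_simp
  push_cast
  ring

/-- the quantity `F s M = ∏_{j=1}^{s-1} T j M`. -/
def F (s M : ℕ) : ℚ := ∏ j ∈ Icc 1 (s-1), T j M

lemma F_pos (s M : ℕ) : 0 < F s M := Finset.prod_pos fun j _ => T_pos j M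

lemma F_ne (s M : ℕ) : F s M ≠ 0 := (F_pos s M).ne'

lemma F_zero (M : ℕ) : F 0 M = 1 := by simp [F]

lemma F_one (M : ℕ) : F 1 M = 1 := by simp [F]

lemma F_M0 (s : ℕ) : F s 0 = 1 := by
  unfold F
  rw [Finset.prod_congr rfl fun j _ => T_zero j]
  simp

lemma F_succ (s M : ℕ) : F (s+1) M = F s M * T s M := by
  cases s with
  | zero =>
      have hT : T 0 M = 1 := by
        unfold T
        norm_num
        exact ⟨Qf_ne _, Qf_ne _⟩
      rw [F_zero, F_one, hT]
      norm_num
  | succ t =>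
      unfold F
      have h1 : (t + 1 + 1) - 1 = (t : ℕ) + 1 := by omega
      have h2 : (t + 1) - 1 = (t : ℕ) := by omega
      rw [h1, h2, Finset.prod_Icc_succ_top (by omega)]

lemma F_two (M : ℕ) : F 2 M = T 1 M := by
  rw [show (2:ℕ) = 1 + 1 from rfl, F_succ, F_one, one_mul]

lemma T_one_M (M : ℕ) : T 1 M = (M : ℚ) + 1 := by
  unfold T
  have e1 : Qf (2*1+2*M) = ((2*(M:ℚ)+1)*(2*(M:ℚ)+2)) * Qf (2*M) := by
    have h : 2*1+2*M = (2*M)+2 := by ring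
    rw [h, Qf_add_two]; push_cast; ring
  have e2 : Qf (1+2*M) = (2*(M:ℚ)+1) * Qf (2*M) := by
    have h : 1+2*M = (2*M)+1 := by ring
    rw [h, Qf_succ]; push_cast; ring
  rw [e1, e2]
  have h2 := Qf_ne (2*M)
  have hq1 : Qf 1 = 1 := by norm_num [Qf, Nat.factorial]
  have hq2 : Qf (2*1) = 2 := by norm_num [Qf, Nat.factorial]
  rw [hq1, hq2]
  field_simp


lemma E2r (b K : ℕ) : ∏ i ∈ range K, ((b+i+1 : ℕ) : ℚ) = Qf (b+K) / Qf b := by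
  induction K with
  | zero => simp [div_self (Qf_ne b)]
  | succ n ih =>
      rw [Finset.prod_range_succ, ih]
      have h : b+(n+1) = (b+n)+1 := by ring
      rw [h, Qf_succ]
      have := Qf_ne b
      have := Qf_ne (b+n)
      field_simp
      push_cast
      ring

lemma E1r (b K : ℕ) : ∏ i ∈ range K, (((b+2*i+1)*(b+2*i+2) : ℕ) : ℚ) = Qf (b+2*K) / Qf b := by
  induction K with
  | zero => simp [div_self (Qf_ne b)]
  | succ n ih =>
      rw [Finset.prod_range_succ, ih]
      have h : b+2*(n+1) = (b+2*n)+2 := by ring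
      rw [h, Qf_add_two]
      have := Qf_ne b
      have := Qf_ne (b+2*n)
      field_simp
      push_cast
      ring

lemma prodIcc (g : ℕ → ℚ) (J : ℕ) : ∏ j ∈ Icc 1 J, g j = ∏ i ∈ range J, g (1+i) := by
  rw [← Finset.Ico_add_one_right_eq_Icc, Finset.prod_Ico_eq_prod_range]
  simp

lemma Fvert (s M : ℕ) : F (s+1) (M+1) = F (s+1) M * ∏ j ∈ Icc 1 s, f M j := by
  unfold F
  simp only [Nat.add_sub_cancel]
  rw [← Finset.prod_mul_distrib]
  exact Finset.prod_congr rfl fun j _ => T_vert j M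

lemma Vprod_eval (M s : ℕ) :
    ∏ j ∈ Icc 1 s, f M j = (Qf (2*s+2*M+2) * Qf (2*M+1)) / (Qf (s+2*M+1) * Qf (s+2*M+2)) := by
  rw [prodIcc]
  have step : ∀ i ∈ range s, f M (1+i) =
      ((((2*M+2)+2*i+1)*((2*M+2)+2*i+2) : ℕ) : ℚ) /
        (((((2*M+1)+i+1) : ℕ) : ℚ) * ((((2*M+2)+i+1) : ℕ) : ℚ)) := by
    intro i _
    unfold f
    have hnum : (2*(1+i)+2*M+1)*(2*(1+i)+2*M+2) = ((2*M+2)+2*i+1)*((2*M+2)+2*i+2) := by ring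
    have hden : ((1+i)+2*M+1)*((1+i)+2*M+2) = ((2*M+1)+i+1)*((2*M+2)+i+1) := by ring
    rw [hnum, hden]
    push_cast
    ring
  rw [Finset.prod_congr rfl step, Finset.prod_div_distrib, Finset.prod_mul_distrib,
    E1r (2*M+2) s, E2r (2*M+1) s, E2r (2*M+2) s]
  have e1 : 2*M+2+2*s = 2*s+2*M+2 := by ring
  have e2 : 2*M+1+s = s+2*M+1 := by ring
  have e3 : 2*M+2+s = s+2*M+2 := by ring
  rw [e1, e2, e3]
  have h1 := Qf_ne (2*M+1)
  have h2 := Qf_ne (2*M+2)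
  have h3 := Qf_ne (s+2*M+1)
  have h4 := Qf_ne (s+2*M+2)
  field_simp

/-- the common ratio -/
def RF (g m : ℕ) : ℚ := (Qf (2*g+2*m+2) * Qf (2*m+1)) / (Qf (g+2*m+1) * Qf (g+2*m+2))

lemma RF_pos (g m : ℕ) : 0 < RF g m :=
  div_pos (mul_pos (Qf_pos _) (Qf_pos _)) (mul_pos (Qf_pos _) (Qf_pos _))

lemma Fvert_eval (g m : ℕ) : F (g+1) (m+1) = F (g+1) m * RF g m := by
  rw [Fvert g m, Vprod_eval m g]
  rfl

lemma T_closed_a1 (t m : ℕ) :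
    T (t+1) (m+1) = (Qf (2*t+2*m+4) * Qf (t+1)) / (Qf (t+2*m+3) * Qf (2*t+2)) := by
  unfold T
  have e1 : 2*(t+1)+2*(m+1) = 2*t+2*m+4 := by ring
  have e2 : (t+1)+2*(m+1) = t+2*m+3 := by ring
  have e3 : 2*(t+1) = 2*t+2 := by ring
  rw [e1, e2, e3]

lemma T_closed_a2 (t m : ℕ) :
    T (t+2) (m+1) = (Qf (2*t+2*m+6) * Qf (t+2)) / (Qf (t+2*m+4) * Qf (2*t+4)) := by
  unfold T
  have e1 : 2*(t+2)+2*(m+1) = 2*t+2*m+6 := by ring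
  have e2 : (t+2)+2*(m+1) = t+2*m+4 := by ring
  have e3 : 2*(t+2) = 2*t+4 := by ring
  rw [e1, e2, e3]

lemma V1_closed (t m : ℕ) :
    ∏ j ∈ Icc 1 t, f (m+1) j = (Qf (2*t+2*m+4) * Qf (2*m+3)) / (Qf (t+2*m+3) * Qf (t+2*m+4)) := by
  rw [Vprod_eval (m+1) t]
  have e1 : 2*t+2*(m+1)+2 = 2*t+2*m+4 := by ring
  have e2 : 2*(m+1)+1 = 2*m+3 := by ring
  have e3 : t+2*(m+1)+1 = t+2*m+3 := by ring
  have e4 : t+2*(m+1)+2 = t+2*m+4 := by ring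
  rw [e1, e2, e3, e4]

lemma V2_closed (t m : ℕ) :
    ∏ j ∈ Icc 1 (t+2), f m j = (Qf (2*t+2*m+6) * Qf (2*m+1)) / (Qf (t+2*m+3) * Qf (t+2*m+4)) := by
  rw [Vprod_eval m (t+2)]
  have e1 : 2*(t+2)+2*m+2 = 2*t+2*m+6 := by ring
  have e3 : (t+2)+2*m+1 = t+2*m+3 := by ring
  have e4 : (t+2)+2*m+2 = t+2*m+4 := by ring
  rw [e1, e3, e4]

lemma key_scalar (t m : ℕ) :
    (∏ j ∈ Icc 1 t, f (m+1) j) * T (t+2) (m+1)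
      = (T (t+2) (m+1) - T (t+1) (m+1)) * ∏ j ∈ Icc 1 (t+2), f m j := by
  rw [V1_closed, V2_closed, T_closed_a2, T_closed_a1]
  have q1 : Qf (2*t+2*m+6) = ((2*(t:ℚ)+2*(m:ℚ)+5) * (2*(t:ℚ)+2*(m:ℚ)+6)) * Qf (2*t+2*m+4) := by
    have h : 2*t+2*m+6 = (2*t+2*m+4)+2 := by ring
    rw [h, Qf_add_two]; push_cast; ring
  have q2 : Qf (2*m+3) = ((2*(m:ℚ)+2) * (2*(m:ℚ)+3)) * Qf (2*m+1) := by
    have h : 2*m+3 = (2*m+1)+2 := by ring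
    rw [h, Qf_add_two]; push_cast; ring
  have q3 : Qf (t+2*m+4) = ((t:ℚ)+2*(m:ℚ)+4) * Qf (t+2*m+3) := by
    have h : t+2*m+4 = (t+2*m+3)+1 := by ring
    rw [h, Qf_succ]; push_cast; ring
  have q4 : Qf (t+2) = ((t:ℚ)+2) * Qf (t+1) := by
    have h : t+2 = (t+1)+1 := by ring
    rw [h, Qf_succ]; push_cast; ring
  have q5 : Qf (2*t+4) = ((2*(t:ℚ)+3) * (2*(t:ℚ)+4)) * Qf (2*t+2) := by
    have h : 2*t+4 = (2*t+2)+2 := by ring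
    rw [h, Qf_add_two]; push_cast; ring
  rw [q1, q2, q3, q4, q5]
  have h1 := Qf_ne (2*t+2*m+4)
  have h2 := Qf_ne (2*m+1)
  have h3 := Qf_ne (t+2*m+3)
  have h4 := Qf_ne (t+1)
  have h5 := Qf_ne (2*t+2)
  have n1 : ((t:ℚ)+2*(m:ℚ)+4) ≠ 0 := by positivity
  have n2 : (2*(t:ℚ)+3) ≠ 0 := by positivity
  have n3 : (2*(t:ℚ)+4) ≠ 0 := by positivity
  field_simp
  ring

lemma Frec_succ (t m : ℕ) :
    F (t+1) (m+2) * F (t+3) m = F (t+1) (m+1) * F (t+3) (m+1) - F (t+2) (m+1)^2 := by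
  have h2 : F (t+2) (m+1) = F (t+1) (m+1) * T (t+1) (m+1) := F_succ (t+1) (m+1)
  have h3 : F (t+3) (m+1) = F (t+1) (m+1) * T (t+1) (m+1) * T (t+2) (m+1) := by
    rw [show t+3 = (t+2)+1 from rfl, F_succ (t+2) (m+1), h2]
  have h4 : F (t+1) (m+2) = F (t+1) (m+1) * ∏ j ∈ Icc 1 t, f (m+1) j := Fvert t (m+1)
  have h5 : F (t+3) (m+1) = F (t+3) m * ∏ j ∈ Icc 1 (t+2), f m j := Fvert (t+2) m
  have hV2 : (∏ j ∈ Icc 1 (t+2), f m j) ≠ 0 := (Finset.prod_pos fun j _ => f_pos m j).ne'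
  have h6 : F (t+3) m * ∏ j ∈ Icc 1 (t+2), f m j
      = F (t+1) (m+1) * T (t+1) (m+1) * T (t+2) (m+1) := by rw [← h5, h3]
  have hkey := key_scalar t m
  apply mul_right_cancel₀ hV2
  rw [h4, h2, h3]
  linear_combination (F (t+1) (m+1) * ∏ j ∈ Icc 1 t, f (m+1) j) * h6 +
    (F (t+1) (m+1))^2 * T (t+1) (m+1) * hkey

lemma Frec_zero (m : ℕ) :
    F 0 (m+2) * F 2 m = F 0 (m+1) * F 2 (m+1) - F 1 (m+1)^2 := by
  rw [F_zero, F_zero, F_one, F_two, F_two, T_one_M, T_one_M]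
  push_cast
  ring_nf

lemma Frec (s m : ℕ) :
    F s (m+2) * F (s+2) m = F s (m+1) * F (s+2) (m+1) - F (s+1) (m+1)^2 := by
  cases s with
  | zero => exact Frec_zero m
  | succ t => exact Frec_succ t m

lemma F_cat (s : ℕ) : F s 1 = (catalan s : ℚ) := by
  induction s with
  | zero => simp [F_zero]
  | succ n ih =>
      rw [F_succ, ih]
      have e1 : Qf (2*n+2*1) = (2*(n:ℚ)+1)*(2*(n:ℚ)+2) * Qf (2*n) := by
        have h : 2*n+2*1 = (2*n)+2 := by ring
        rw [h, Qf_add_two]; push_cast; ring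
      have e2 : Qf (n+2*1) = ((n:ℚ)+1)*((n:ℚ)+2) * Qf n := by
        have h : n+2*1 = n+2 := by ring
        rw [h, Qf_add_two]
      have hc : (n+2) * catalan (n+1) = 2*(2*n+1) * catalan n := by
        have b2 := succ_mul_catalan_eq_centralBinom (n+1)
        have b1 := succ_mul_catalan_eq_centralBinom n
        have b3 := Nat.succ_mul_centralBinom_succ n
        have key : (n+1) * ((n+2) * catalan (n+1)) = (n+1) * (2*(2*n+1) * catalan n) := by
          calc (n+1) * ((n+2) * catalan (n+1))
              = (n+1) * ((n+1+1) * catalan (n+1)) := rfl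
            _ = (n+1) * Nat.centralBinom (n+1) := by rw [b2]
            _ = 2*(2*n+1) * Nat.centralBinom n := b3
            _ = 2*(2*n+1) * ((n+1) * catalan n) := by rw [b1]
            _ = (n+1) * (2*(2*n+1) * catalan n) := by ring
        exact Nat.eq_of_mul_eq_mul_left (Nat.succ_pos n) key
      have hcQ : ((n:ℚ)+2) * (catalan (n+1) : ℚ) = 2*(2*(n:ℚ)+1) * (catalan n : ℚ) := by
        exact_mod_cast hc
      unfold T
      rw [e1, e2]
      have h1 := Qf_ne (2*n)
      have h2 := Qf_ne n
      have n1 : ((n:ℚ)+1) ≠ 0 := by positivity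
      have n2 : ((n:ℚ)+2) ≠ 0 := by positivity
      field_simp
      linear_combination (-1 : ℚ) * hcQ

section Det

/-! ### Determinant part -/

/-- Hankel matrix built from a sequence -/
def Hk (h : ℕ → ℚ) (s m : ℕ) : Matrix (Fin m) (Fin m) ℚ :=
  Matrix.of fun i j => h ((i : ℕ) + (j : ℕ) + s)

def qform {n : ℕ} (Y : Matrix (Fin n) (Fin n) ℚ) (x y : Fin n → ℚ) : ℚ :=
  ∑ k, ∑ l, x k * Y k l * y l

lemma qform_symm {n : ℕ} (Y : Matrix (Fin n) (Fin n) ℚ) (hY : ∀ k l, Y k l = Y l k)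
    (x y : Fin n → ℚ) : qform Y x y = qform Y y x := by
  unfold qform
  rw [Finset.sum_comm]
  refine Finset.sum_congr rfl fun l _ => Finset.sum_congr rfl fun k _ => ?_
  rw [hY k l]
  ring

lemma triple_apply {n : ℕ} {α β : Type*}
    (C : Matrix α (Fin n) ℚ) (X : Matrix (Fin n) (Fin n) ℚ) (B : Matrix (Fin n) β ℚ)
    (a : α) (b : β) :
    (C * X * B) a b = ∑ k, ∑ l, C a k * X k l * B l b := by
  rw [Matrix.mul_apply]
  simp only [Matrix.mul_apply, Finset.sum_mul]
  rw [Finset.sum_comm]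

lemma det_oneBorder {n : ℕ} (M : Matrix (Fin n) (Fin n) ℚ) [Invertible M]
    (x y : Fin n → ℚ) (d : ℚ) :
    (Matrix.fromBlocks M (Matrix.of fun i (_ : Fin 1) => y i)
      (Matrix.of fun (_ : Fin 1) j => x j) (Matrix.of fun (_ : Fin 1) (_ : Fin 1) => d)).det
      = M.det * (d - qform (⅟M) x y) := by
  rw [Matrix.det_fromBlocks₁₁]
  congr 1
  rw [Matrix.det_fin_one]
  simp only [Matrix.sub_apply, Matrix.of_apply]
  rw [triple_apply]
  unfold qform
  simp

/-- left-border equivalence: inner at positions 1..n, border at 0 -/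
noncomputable def eL (n : ℕ) : Fin n ⊕ Fin 1 ≃ Fin (n+1) :=
  Equiv.ofBijective
    (Sum.elim (fun i : Fin n => (⟨(i : ℕ) + 1, by omega⟩ : Fin (n+1)))
      (fun _ => (⟨0, by omega⟩ : Fin (n+1))))
    (by
      rw [Fintype.bijective_iff_injective_and_card]
      refine ⟨?_, by simp⟩
      rintro (a | a) (b | b) hab
      · simp only [Sum.elim_inl, Fin.mk.injEq] at hab
        have : a = b := by
          apply Fin.ext; omega
        rw [this]
      · simp only [Sum.elim_inl, Sum.elim_inr, Fin.mk.injEq] at hab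
        omega
      · simp only [Sum.elim_inl, Sum.elim_inr, Fin.mk.injEq] at hab
        omega
      · rw [Subsingleton.elim a b])

lemma eL_inl (n : ℕ) (i : Fin n) : ((eL n) (Sum.inl i) : ℕ) = (i : ℕ) + 1 := rfl
lemma eL_inr (n : ℕ) (b : Fin 1) : ((eL n) (Sum.inr b) : ℕ) = 0 := rfl

/-- right-border equivalence: inner at positions 0..n-1, border at n -/
noncomputable def eR (n : ℕ) : Fin n ⊕ Fin 1 ≃ Fin (n+1) :=
  Equiv.ofBijective
    (Sum.elim (fun i : Fin n => (⟨(i : ℕ), by omega⟩ : Fin (n+1)))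
      (fun _ => (⟨n, by omega⟩ : Fin (n+1))))
    (by
      rw [Fintype.bijective_iff_injective_and_card]
      refine ⟨?_, by simp⟩
      rintro (a | a) (b | b) hab
      · simp only [Sum.elim_inl, Fin.mk.injEq] at hab
        have : a = b := by
          apply Fin.ext; omega
        rw [this]
      · simp only [Sum.elim_inl, Sum.elim_inr, Fin.mk.injEq] at hab
        have := a.2; omega
      · simp only [Sum.elim_inl, Sum.elim_inr, Fin.mk.injEq] at hab
        have := b.2; omega
      · rw [Subsingleton.elim a b])

lemma eR_inl (n : ℕ) (i : Fin n) : ((eR n) (Sum.inl i) : ℕ) = (i : ℕ) := rfl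
lemma eR_inr (n : ℕ) (b : Fin 1) : ((eR n) (Sum.inr b) : ℕ) = n := rfl

/-- two-border equivalence: inner at 1..n, borders at 0 and n+1 -/
noncomputable def e2 (n : ℕ) : Fin n ⊕ Fin 2 ≃ Fin (n+2) :=
  Equiv.ofBijective
    (Sum.elim (fun i : Fin n => (⟨(i : ℕ) + 1, by omega⟩ : Fin (n+2)))
      (fun b : Fin 2 => (⟨(b : ℕ) * (n+1), by
        have hb : (b : ℕ) ≤ 1 := by omega
        calc (b : ℕ) * (n+1) ≤ 1 * (n+1) := Nat.mul_le_mul_right _ hb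
        _ < n + 2 := by omega⟩ : Fin (n+2))))
    (by
      rw [Fintype.bijective_iff_injective_and_card]
      refine ⟨?_, by simp⟩
      rintro (a | a) (b | b) hab
      · simp only [Sum.elim_inl, Fin.mk.injEq] at hab
        have : a = b := by
          apply Fin.ext; omega
        rw [this]
      · simp only [Sum.elim_inl, Sum.elim_inr, Fin.mk.injEq] at hab
        have ha := a.2; have hb := b.2
        rcases (by omega : (b : ℕ) = 0 ∨ (b : ℕ) = 1) with hb0 | hb0 <;>
          rw [hb0] at hab <;> omega
      · simp only [Sum.elim_inl, Sum.elim_inr, Fin.mk.injEq] at hab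
        have ha := a.2; have hb := b.2
        rcases (by omega : (a : ℕ) = 0 ∨ (a : ℕ) = 1) with ha0 | ha0 <;>
          rw [ha0] at hab <;> omega
      · simp only [Sum.elim_inr, Fin.mk.injEq] at hab
        have ha := a.2; have hb := b.2
        have hv : (a : ℕ) = (b : ℕ) := Nat.eq_of_mul_eq_mul_right (by omega) hab
        exact congrArg Sum.inr (Fin.ext hv))

lemma e2_inl (n : ℕ) (i : Fin n) : ((e2 n) (Sum.inl i) : ℕ) = (i : ℕ) + 1 := rfl
lemma e2_inr (n : ℕ) (b : Fin 2) : ((e2 n) (Sum.inr b) : ℕ) = (b : ℕ) * (n+1) := rfl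

lemma dodgson (h : ℕ → ℚ) (s n : ℕ) (hM : (Hk h (s+2) n).det ≠ 0) :
    (Hk h s (n+2)).det * (Hk h (s+2) n).det
      = (Hk h s (n+1)).det * (Hk h (s+2) (n+1)).det - (Hk h (s+1) (n+1)).det ^ 2 := by
  have hMu : IsUnit (Hk h (s+2) n).det := isUnit_iff_ne_zero.mpr hM
  haveI : Invertible (Hk h (s+2) n) := (Hk h (s+2) n).invertibleOfIsUnitDet hMu
  set M : Matrix (Fin n) (Fin n) ℚ := Hk h (s+2) n with hMdef
  set u : Fin n → ℚ := fun i => h ((i : ℕ) + 1 + s) with hu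
  set v : Fin n → ℚ := fun i => h ((i : ℕ) + n + 2 + s) with hv
  have hYsym : ∀ k l, (⅟M) k l = (⅟M) l k := by
    have hMT : M.transpose = M := by
      ext i j
      simp only [Matrix.transpose_apply, hMdef, Hk, Matrix.of_apply]
      congr 1
      omega
    have h1 : (⅟M) = M⁻¹ := Matrix.invOf_eq_nonsing_inv M
    have h2 : M⁻¹.transpose = M⁻¹ := by rw [Matrix.transpose_nonsing_inv, hMT]
    intro k l
    calc (⅟M) k l = M⁻¹ k l := by rw [h1]
    _ = M⁻¹.transpose l k := rfl
    _ = M⁻¹ l k := by rw [h2]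
    _ = (⅟M) l k := by rw [h1]
  have hLmat : (Hk h s (n+1)).submatrix (eL n) (eL n) =
      Matrix.fromBlocks M (Matrix.of fun i (_ : Fin 1) => u i)
        (Matrix.of fun (_ : Fin 1) j => u j) (Matrix.of fun (_ : Fin 1) (_ : Fin 1) => h s) := by
    ext ab cd
    rcases ab with i | i <;> rcases cd with j | j <;>
      simp only [Matrix.submatrix_apply, Matrix.fromBlocks_apply₁₁, Matrix.fromBlocks_apply₁₂,
        Matrix.fromBlocks_apply₂₁, Matrix.fromBlocks_apply₂₂, hMdef, hu, Hk, Matrix.of_apply,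
        eL_inl, eL_inr] <;> congr 1 <;> omega
  have hRmat : (Hk h (s+2) (n+1)).submatrix (eR n) (eR n) =
      Matrix.fromBlocks M (Matrix.of fun i (_ : Fin 1) => v i)
        (Matrix.of fun (_ : Fin 1) j => v j)
        (Matrix.of fun (_ : Fin 1) (_ : Fin 1) => h (2*n+2+s)) := by
    ext ab cd
    rcases ab with i | i <;> rcases cd with j | j <;>
      simp only [Matrix.submatrix_apply, Matrix.fromBlocks_apply₁₁, Matrix.fromBlocks_apply₁₂,
        Matrix.fromBlocks_apply₂₁, Matrix.fromBlocks_apply₂₂, hMdef, hv, Hk, Matrix.of_apply,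
        eR_inl, eR_inr] <;> congr 1 <;> omega
  have hXmat : (Hk h (s+1) (n+1)).submatrix (eR n) (eL n) =
      Matrix.fromBlocks M (Matrix.of fun i (_ : Fin 1) => u i)
        (Matrix.of fun (_ : Fin 1) j => v j)
        (Matrix.of fun (_ : Fin 1) (_ : Fin 1) => h (n+1+s)) := by
    ext ab cd
    rcases ab with i | i <;> rcases cd with j | j <;>
      simp only [Matrix.submatrix_apply, Matrix.fromBlocks_apply₁₁, Matrix.fromBlocks_apply₁₂,
        Matrix.fromBlocks_apply₂₁, Matrix.fromBlocks_apply₂₂, hMdef, hu, hv, Hk, Matrix.of_apply,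
        eR_inl, eR_inr, eL_inl, eL_inr] <;> congr 1 <;> omega
  have d1 : (Hk h s (n+1)).det = M.det * (h s - qform (⅟M) u u) := by
    rw [← Matrix.det_submatrix_equiv_self (eL n) (Hk h s (n+1)), hLmat, det_oneBorder]
  have d2 : (Hk h (s+2) (n+1)).det = M.det * (h (2*n+2+s) - qform (⅟M) v v) := by
    rw [← Matrix.det_submatrix_equiv_self (eR n) (Hk h (s+2) (n+1)), hRmat, det_oneBorder]
  set σ : Equiv.Perm (Fin n ⊕ Fin 1) := (eR n).trans (eL n).symm with hσ
  have hmix1 : (Hk h (s+1) (n+1)).submatrix (eR n) (eL n)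
      = ((Hk h (s+1) (n+1)).submatrix (eL n) (eL n)).submatrix σ id := by
    ext i j
    simp only [Matrix.submatrix_apply, id_eq, hσ, Equiv.trans_apply, Equiv.apply_symm_apply]
  have key : M.det * (h (n+1+s) - qform (⅟M) v u)
      = ((Equiv.Perm.sign σ : ℤ) : ℚ) * (Hk h (s+1) (n+1)).det := by
    rw [← det_oneBorder M v u (h (n+1+s)), ← hXmat, hmix1, Matrix.det_permute,
      Matrix.det_submatrix_equiv_self]
  set B2 : Matrix (Fin n) (Fin 2) ℚ := Matrix.of (fun i (b : Fin 2) => ![u i, v i] b) with hB2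
  set C2 : Matrix (Fin 2) (Fin n) ℚ := Matrix.of (fun (b : Fin 2) j => ![u j, v j] b) with hC2
  set D2 : Matrix (Fin 2) (Fin 2) ℚ :=
    Matrix.of (fun (b b' : Fin 2) => ![![h s, h (n+1+s)], ![h (n+1+s), h (2*n+2+s)]] b b') with hD2
  have hAmat : (Hk h s (n+2)).submatrix (e2 n) (e2 n) = Matrix.fromBlocks M B2 C2 D2 := by
    ext ab cd
    rcases ab with i | i <;> rcases cd with j | j
    · simp only [Matrix.submatrix_apply, Matrix.fromBlocks_apply₁₁, hMdef, Hk, Matrix.of_apply,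
        e2_inl]
      congr 1
      omega
    · fin_cases j <;>
        simp only [Matrix.submatrix_apply, Matrix.fromBlocks_apply₁₂, hB2, hu, hv, Hk,
          Matrix.of_apply, e2_inl, e2_inr, Matrix.cons_val_zero, Matrix.cons_val_one,
          Matrix.head_cons, Fin.isValue, Fin.val_zero, Fin.val_one] <;> congr 1 <;> omega
    · fin_cases i <;>
        simp only [Matrix.submatrix_apply, Matrix.fromBlocks_apply₂₁, hC2, hu, hv, Hk,
          Matrix.of_apply, e2_inl, e2_inr, Matrix.cons_val_zero, Matrix.cons_val_one,
          Matrix.head_cons, Fin.isValue, Fin.val_zero, Fin.val_one] <;> congr 1 <;> omega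
    · fin_cases i <;> fin_cases j <;>
        simp only [Matrix.submatrix_apply, Matrix.fromBlocks_apply₂₂, hD2, Hk,
          Matrix.of_apply, e2_inr, Matrix.cons_val_zero, Matrix.cons_val_one,
          Matrix.head_cons, Fin.isValue, Fin.val_zero, Fin.val_one] <;> congr 1 <;> omega
  have entry : ∀ b b', (C2 * ⅟M * B2) b b' = qform (⅟M) (fun k => C2 b k) (fun l => B2 l b') :=
    fun b b' => triple_apply C2 (⅟M) B2 b b'
  have hC0 : (fun k => C2 0 k) = u := by funext k; simp [hC2]
  have hC1 : (fun k => C2 1 k) = v := by funext k; simp [hC2]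
  have hB0 : (fun l => B2 l 0) = u := by funext l; simp [hB2]
  have hB1 : (fun l => B2 l 1) = v := by funext l; simp [hB2]
  have hqsym' : qform (⅟M) u v = qform (⅟M) v u := qform_symm _ hYsym u v
  have detA : (Hk h s (n+2)).det = M.det *
      ((h s - qform (⅟M) u u) * (h (2*n+2+s) - qform (⅟M) v v)
        - (h (n+1+s) - qform (⅟M) v u) * (h (n+1+s) - qform (⅟M) v u)) := by
    rw [← Matrix.det_submatrix_equiv_self (e2 n) (Hk h s (n+2)), hAmat,
      Matrix.det_fromBlocks₁₁, Matrix.det_fin_two]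
    congr 1
    have s00 : (D2 - C2 * ⅟M * B2) 0 0 = h s - qform (⅟M) u u := by
      rw [Matrix.sub_apply, entry 0 0, hC0, hB0]
      congr 1
    have s01 : (D2 - C2 * ⅟M * B2) 0 1 = h (n+1+s) - qform (⅟M) v u := by
      rw [Matrix.sub_apply, entry 0 1, hC0, hB1, ← hqsym']
      congr 1
    have s10 : (D2 - C2 * ⅟M * B2) 1 0 = h (n+1+s) - qform (⅟M) v u := by
      rw [Matrix.sub_apply, entry 1 0, hC1, hB0]
      congr 1
    have s11 : (D2 - C2 * ⅟M * B2) 1 1 = h (2*n+2+s) - qform (⅟M) v v := by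
      rw [Matrix.sub_apply, entry 1 1, hC1, hB1]
      congr 1
    rw [s00, s01, s10, s11]
  have hsq : (M.det * (h (n+1+s) - qform (⅟M) v u))^2 = (Hk h (s+1) (n+1)).det ^ 2 := by
    rw [key, mul_pow]
    have h1 : (Equiv.Perm.sign σ)^2 = 1 := Int.units_sq _
    have h2 : ((Equiv.Perm.sign σ : ℤ))^2 = 1 := by
      rw [← Units.val_pow_eq_pow_val, h1, Units.val_one]
    have h3 : (((Equiv.Perm.sign σ : ℤ) : ℚ))^2 = 1 := by exact_mod_cast h2
    rw [h3, one_mul]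
  rw [detA, d1, d2]
  linear_combination - hsq


/-! ### determinant evaluation -/

lemma hankel_det : ∀ m s, (Hk (fun k => (catalan k : ℚ)) s m).det = F s m := by
  intro m
  induction m using Nat.strong_induction_on with
  | _ m ih =>
    match m, ih with
    | 0, _ =>
        intro s
        rw [Matrix.det_isEmpty]
        exact (F_M0 s).symm
    | 1, _ =>
        intro s
        rw [Matrix.det_fin_one, F_cat]
        simp [Hk]
    | (k+2), ih =>
        intro s
        have hM : (Hk (fun k => (catalan k : ℚ)) (s+2) k).det = F (s+2) k := ih k (by omega) (s+2)
        have hMne : (Hk (fun k => (catalan k : ℚ)) (s+2) k).det ≠ 0 := by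
          rw [hM]; exact F_ne _ _
        have D := dodgson (fun k => (catalan k : ℚ)) s k hMne
        rw [hM, ih (k+1) (by omega) s, ih (k+1) (by omega) (s+2), ih (k+1) (by omega) (s+1)] at D
        have D2 : (Hk (fun k => (catalan k : ℚ)) s (k+2)).det * F (s+2) k
            = F s (k+2) * F (s+2) k := by rw [D, ← Frec s k]
        exact mul_right_cancel₀ (F_ne (s+2) k) D2

/-! ### sigma side -/

lemma Qf_zero : Qf 0 = 1 := by norm_num [Qf, Nat.factorial]

lemma prodIccN (g : ℕ → ℕ) (J : ℕ) : ∏ j ∈ Icc 1 J, g j = ∏ i ∈ range J, g (1+i) := by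
  rw [← Finset.Ico_add_one_right_eq_Icc, Finset.prod_Ico_eq_prod_range]
  simp

lemma sigma_odd_prod (n J : ℕ) :
    sigmaNG n (2*J+1) = ∏ i ∈ range (J+1), Nat.choose (n+2*i) (4*i+1) := by
  unfold sigmaNG
  rw [if_neg (by simp [Nat.even_iff] <;> omega)]
  have hK : (2*J+1+1)/2 = J+1 := by omega
  rw [hK, prodIccN]
  refine Finset.prod_congr rfl fun i _ => ?_
  congr 1 <;> omega

lemma sigma_even_prod (n J : ℕ) :
    sigmaNG n (2*J+2) = ∏ i ∈ range (J+1), Nat.choose (n+2*i+1) (4*i+3) := by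
  unfold sigmaNG
  rw [if_pos (by simp [Nat.even_iff] <;> omega)]
  have hK : (2*J+2)/2 = J+1 := by omega
  rw [hK, prodIccN]
  refine Finset.prod_congr rfl fun i _ => ?_
  congr 1 <;> omega

lemma choose_one_step (a r : ℕ) :
    Nat.choose (a+1) r * (a+1-r) = Nat.choose a r * (a+1) :=
  (Nat.choose_mul_succ_eq a r).symm

lemma choose_two_step (a r : ℕ) :
    Nat.choose (a+2) r * ((a+1-r)*(a+2-r)) = Nat.choose a r * ((a+1)*(a+2)) := by
  have h1 := Nat.choose_mul_succ_eq a r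
  have h2 := Nat.choose_mul_succ_eq (a+1) r
  calc Nat.choose (a+2) r * ((a+1-r)*(a+2-r))
      = (Nat.choose (a+1+1) r * (a+1+1-r)) * (a+1-r) := by
        have : a+2-r = a+1+1-r := by omega
        rw [this]; ring
  _ = (Nat.choose (a+1) r * (a+1+1)) * (a+1-r) := by rw [← h2]
  _ = (Nat.choose (a+1) r * (a+1-r)) * (a+2) := by ring
  _ = (Nat.choose a r * (a+1)) * (a+2) := by rw [← h1]
  _ = Nat.choose a r * ((a+1)*(a+2)) := by ring

lemma Eeven (K : ℕ) : ∏ i ∈ range K, ((2*i+2 : ℕ) : ℚ) = 2^K * Qf K := by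
  induction K with
  | zero => simp [Qf_zero]
  | succ n ih =>
      rw [Finset.prod_range_succ, ih, Qf_succ]
      push_cast
      ring

lemma prodOddEval (K : ℕ) : (∏ i ∈ range K, ((2*i+1 : ℕ) : ℚ)) * (2^K * Qf K) = Qf (2*K) := by
  have h1 : ∏ i ∈ range K, (((0+2*i+1)*(0+2*i+2) : ℕ) : ℚ) = Qf (0+2*K) / Qf 0 := E1r 0 K
  rw [Qf_zero] at h1
  have h2 : ∏ i ∈ range K, (((0+2*i+1)*(0+2*i+2) : ℕ) : ℚ)
      = (∏ i ∈ range K, ((2*i+1 : ℕ) : ℚ)) * ∏ i ∈ range K, ((2*i+2 : ℕ) : ℚ) := by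
    rw [← Finset.prod_mul_distrib]
    refine Finset.prod_congr rfl fun i _ => ?_
    push_cast
    ring
  rw [h2, Eeven] at h1
  rw [h1]
  norm_num

/-- descending pair product shared by both parities -/
lemma descEval (J m : ℕ) :
    ∏ i ∈ range (J+1), (((2*(J+m-i)+2)*(2*(J+m-i)+3) : ℕ) : ℚ)
      = Qf (2*J+2*m+3) / Qf (2*m+1) := by
  rw [← Finset.prod_range_reflect]
  have h1 : ∀ i ∈ range (J+1),
      ((((2*(J+m-(J+1-1-i))+2)*(2*(J+m-(J+1-1-i))+3) : ℕ)) : ℚ)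
        = ((((2*m+1)+2*i+1)*((2*m+1)+2*i+2) : ℕ) : ℚ) := by
    intro i hi
    rw [Finset.mem_range] at hi
    congr 1
    have : J+m-(J+1-1-i) = m+i := by omega
    rw [this]
    ring
  rw [Finset.prod_congr rfl h1, E1r (2*m+1) (J+1)]
  congr 2
  omega

/-- ascending pair product -/
lemma ascEval (b K : ℕ) :
    ∏ i ∈ range K, (((b+2*i+1)*(b+2*i+2) : ℕ) : ℚ) = Qf (b+2*K) / Qf b := E1r b K

/-- odd base case -/
lemma base_odd (J : ℕ) :
    (sigmaNG (2*J+2) (2*J+1) : ℚ) = 2^(2*J+1) * (sigmaNG (2*J+1) (2*J+1) : ℚ) := by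
  have main : (sigmaNG (2*J+2) (2*J+1)) * ∏ i ∈ range (J+1), (2*(J-i)+1)
      = (sigmaNG (2*J+1) (2*J+1)) * ∏ i ∈ range (J+1), (2*(J+i+1)) := by
    rw [sigma_odd_prod (2*J+2) J, sigma_odd_prod (2*J+1) J, ← Finset.prod_mul_distrib,
      ← Finset.prod_mul_distrib]
    refine Finset.prod_congr rfl fun i hi => ?_
    rw [Finset.mem_range] at hi
    have e1 : 2*J+2+2*i = (2*J+1+2*i)+1 := by omega
    have e2 : 2*(J-i)+1 = (2*J+1+2*i)+1-(4*i+1) := by omega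
    have e3 : 2*(J+i+1) = (2*J+1+2*i)+1 := by omega
    rw [e1, e2, e3]
    exact choose_one_step (2*J+1+2*i) (4*i+1)
  -- cast to ℚ
  have mainQ : (sigmaNG (2*J+2) (2*J+1) : ℚ) * ∏ i ∈ range (J+1), ((2*(J-i)+1 : ℕ) : ℚ)
      = (sigmaNG (2*J+1) (2*J+1) : ℚ) * ∏ i ∈ range (J+1), ((2*(J+i+1) : ℕ) : ℚ) := by
    exact_mod_cast main
  -- evaluate the two products
  have hdesc : ∏ i ∈ range (J+1), ((2*(J-i)+1 : ℕ) : ℚ)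
      = ∏ i ∈ range (J+1), ((2*i+1 : ℕ) : ℚ) := by
    rw [← Finset.prod_range_reflect]
    refine Finset.prod_congr rfl fun i hi => ?_
    rw [Finset.mem_range] at hi
    congr 1
    omega
  have hasc : ∏ i ∈ range (J+1), ((2*(J+i+1) : ℕ) : ℚ)
      = 2^(J+1) * (Qf (2*J+1) / Qf J) := by
    have h2 : ∏ i ∈ range (J+1), ((2*(J+i+1) : ℕ) : ℚ)
        = (∏ i ∈ range (J+1), (2:ℚ)) * ∏ i ∈ range (J+1), ((J+i+1 : ℕ) : ℚ) := by
      rw [← Finset.prod_mul_distrib]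
      refine Finset.prod_congr rfl fun i _ => ?_
      push_cast
      ring
    rw [h2, Finset.prod_const, Finset.card_range, E2r J (J+1)]
    rw [show J+(J+1) = 2*J+1 from by omega]
  have hodd := prodOddEval (J+1)
  rw [hdesc, hasc] at mainQ
  -- final algebra
  have n1 := Qf_ne J
  have n2 := Qf_ne (J+1)
  have n3 := Qf_ne (2*J+1)
  have n4 : (2:ℚ)^(J+1) ≠ 0 := by positivity
  have e1 : Qf (2*J+2) = (2*(J:ℚ)+2) * Qf (2*J+1) := by
    have h : 2*J+2 = (2*J+1)+1 := by omega
    rw [h, Qf_succ]; push_cast; ring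
  have e2 : Qf (J+1) = ((J:ℚ)+1) * Qf J := by
    rw [Qf_succ]
  have hoddv : ∏ i ∈ range (J+1), ((2*i+1 : ℕ) : ℚ)
      = Qf (2*(J+1)) / (2^(J+1) * Qf (J+1)) := by
    rw [eq_div_iff (by positivity)]
    exact hodd
  rw [hoddv] at mainQ
  have e3 : Qf (2*(J+1)) = (2*(J:ℚ)+1)*(2*(J:ℚ)+2) * Qf (2*J) := by
    have h : 2*(J+1) = (2*J)+2 := by omega
    rw [h, Qf_add_two]; push_cast; ring
  have e4 : Qf (2*J+1) = (2*(J:ℚ)+1) * Qf (2*J) := by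
    rw [Qf_succ]; push_cast; ring
  have n5 := Qf_ne (2*J)
  have n6 : ((J:ℚ)+1) ≠ 0 := by positivity
  have n7 : (2*(J:ℚ)+1) ≠ 0 := by positivity
  have hXne : Qf (2*(J+1)) / (2^(J+1) * Qf (J+1)) ≠ 0 := by
    apply div_ne_zero (Qf_ne _)
    positivity
  apply mul_right_cancel₀ hXne
  rw [mainQ, e3, e4, e2]
  have hp : (2:ℚ)^(2*J+1) * 2 = 2^(J+1) * 2^(J+1) := by
    rw [← pow_succ, ← pow_add]
    congr 1
    omega
  field_simp
  linear_combination (↑(sigmaNG (2*J+1) (2*J+1)) * (2*(J:ℚ)+1) * Qf (2*J) * Qf J * ((J:ℚ)+1)) * hp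

/-- even base case -/
lemma base_even (J : ℕ) :
    (sigmaNG (2*J+3) (2*J+2) : ℚ) = 2^(2*J+2) * (sigmaNG (2*J+2) (2*J+2) : ℚ) := by
  have main : (sigmaNG (2*J+3) (2*J+2)) * ∏ i ∈ range (J+1), (2*(J-i)+1)
      = (sigmaNG (2*J+2) (2*J+2)) * ∏ i ∈ range (J+1), (2*(J+i+2)) := by
    rw [sigma_even_prod (2*J+3) J, sigma_even_prod (2*J+2) J, ← Finset.prod_mul_distrib,
      ← Finset.prod_mul_distrib]
    refine Finset.prod_congr rfl fun i hi => ?_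
    rw [Finset.mem_range] at hi
    have e1 : 2*J+3+2*i+1 = (2*J+2+2*i+1)+1 := by omega
    have e2 : 2*(J-i)+1 = (2*J+2+2*i+1)+1-(4*i+3) := by omega
    have e3 : 2*(J+i+2) = (2*J+2+2*i+1)+1 := by omega
    rw [e1, e2, e3]
    exact choose_one_step (2*J+2+2*i+1) (4*i+3)
  have mainQ : (sigmaNG (2*J+3) (2*J+2) : ℚ) * ∏ i ∈ range (J+1), ((2*(J-i)+1 : ℕ) : ℚ)
      = (sigmaNG (2*J+2) (2*J+2) : ℚ) * ∏ i ∈ range (J+1), ((2*(J+i+2) : ℕ) : ℚ) := by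
    exact_mod_cast main
  have hdesc : ∏ i ∈ range (J+1), ((2*(J-i)+1 : ℕ) : ℚ)
      = ∏ i ∈ range (J+1), ((2*i+1 : ℕ) : ℚ) := by
    rw [← Finset.prod_range_reflect]
    refine Finset.prod_congr rfl fun i hi => ?_
    rw [Finset.mem_range] at hi
    congr 1
    omega
  have hasc : ∏ i ∈ range (J+1), ((2*(J+i+2) : ℕ) : ℚ)
      = 2^(J+1) * (Qf (2*J+2) / Qf (J+1)) := by
    have h2 : ∏ i ∈ range (J+1), ((2*(J+i+2) : ℕ) : ℚ)
        = (∏ i ∈ range (J+1), (2:ℚ)) * ∏ i ∈ range (J+1), (((J+1)+i+1 : ℕ) : ℚ) := by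
      rw [← Finset.prod_mul_distrib]
      refine Finset.prod_congr rfl fun i _ => ?_
      push_cast
      ring
    rw [h2, Finset.prod_const, Finset.card_range, E2r (J+1) (J+1)]
    rw [show (J+1)+(J+1) = 2*J+2 from by omega]
  have hodd := prodOddEval (J+1)
  rw [hdesc, hasc] at mainQ
  have n1 := Qf_ne (J+1)
  have n2 := Qf_ne (2*J+2)
  have n4 : (2:ℚ)^(J+1) ≠ 0 := by positivity
  have hoddv : ∏ i ∈ range (J+1), ((2*i+1 : ℕ) : ℚ)
      = Qf (2*(J+1)) / (2^(J+1) * Qf (J+1)) := by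
    rw [eq_div_iff (by positivity)]
    exact hodd
  rw [hoddv] at mainQ
  have e3 : Qf (2*(J+1)) = Qf (2*J+2) := by congr 1
  have hXne : Qf (2*(J+1)) / (2^(J+1) * Qf (J+1)) ≠ 0 := by
    apply div_ne_zero (Qf_ne _)
    positivity
  apply mul_right_cancel₀ hXne
  rw [mainQ, e3]
  have hp : (2:ℚ)^(2*J+2) = 2^(J+1) * 2^(J+1) := by
    rw [← pow_add]
    congr 1
    omega
  field_simp
  linear_combination (↑(sigmaNG (2*J+2) (2*J+2)) * Qf (2*J+2) * Qf (J+1)) * hp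


/-- odd step -/
lemma step_odd (J m : ℕ) :
    (sigmaNG (2*J+4+2*m) (2*J+1) : ℚ) = (sigmaNG (2*J+2+2*m) (2*J+1) : ℚ) * RF (2*J+1) m := by
  have main : (sigmaNG (2*J+4+2*m) (2*J+1)) * ∏ i ∈ range (J+1), ((2*(J+m-i)+2)*(2*(J+m-i)+3))
      = (sigmaNG (2*J+2+2*m) (2*J+1))
          * ∏ i ∈ range (J+1), ((2*J+2*m+2+2*i+1)*(2*J+2*m+2+2*i+2)) := by
    rw [sigma_odd_prod (2*J+4+2*m) J, sigma_odd_prod (2*J+2+2*m) J, ← Finset.prod_mul_distrib,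
      ← Finset.prod_mul_distrib]
    refine Finset.prod_congr rfl fun i hi => ?_
    rw [Finset.mem_range] at hi
    have e1 : 2*J+4+2*m+2*i = (2*J+2+2*m+2*i)+2 := by omega
    have e2 : 2*(J+m-i)+2 = (2*J+2+2*m+2*i)+1-(4*i+1) := by omega
    have e3 : 2*(J+m-i)+3 = (2*J+2+2*m+2*i)+2-(4*i+1) := by omega
    have e4 : 2*J+2*m+2+2*i+1 = (2*J+2+2*m+2*i)+1 := by omega
    have e5 : 2*J+2*m+2+2*i+2 = (2*J+2+2*m+2*i)+2 := by omega
    rw [e1, e2, e3, e4, e5]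
    exact choose_two_step (2*J+2+2*m+2*i) (4*i+1)
  have mainQ : (sigmaNG (2*J+4+2*m) (2*J+1) : ℚ)
        * ∏ i ∈ range (J+1), (((2*(J+m-i)+2)*(2*(J+m-i)+3) : ℕ) : ℚ)
      = (sigmaNG (2*J+2+2*m) (2*J+1) : ℚ)
        * ∏ i ∈ range (J+1), (((2*J+2*m+2+2*i+1)*(2*J+2*m+2+2*i+2) : ℕ) : ℚ) := by
    exact_mod_cast main
  rw [descEval J m, ascEval (2*J+2*m+2) (J+1)] at mainQ
  have hXne : Qf (2*J+2*m+3) / Qf (2*m+1) ≠ 0 := div_ne_zero (Qf_ne _) (Qf_ne _)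
  apply mul_right_cancel₀ hXne
  rw [mainQ]
  unfold RF
  rw [show 2*J+2*m+2+2*(J+1) = 4*J+2*m+4 from by omega,
    show 2*(2*J+1)+2*m+2 = 4*J+2*m+4 from by omega,
    show 2*J+1+2*m+1 = 2*J+2*m+2 from by omega,
    show 2*J+1+2*m+2 = 2*J+2*m+3 from by omega]
  have h1 := Qf_ne (2*J+2*m+2)
  have h2 := Qf_ne (2*J+2*m+3)
  have h3 := Qf_ne (2*m+1)
  field_simp

/-- even step -/
lemma step_even (J m : ℕ) :
    (sigmaNG (2*J+5+2*m) (2*J+2) : ℚ) = (sigmaNG (2*J+3+2*m) (2*J+2) : ℚ) * RF (2*J+2) m := by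
  have main : (sigmaNG (2*J+5+2*m) (2*J+2)) * ∏ i ∈ range (J+1), ((2*(J+m-i)+2)*(2*(J+m-i)+3))
      = (sigmaNG (2*J+3+2*m) (2*J+2))
          * ∏ i ∈ range (J+1), ((2*J+2*m+4+2*i+1)*(2*J+2*m+4+2*i+2)) := by
    rw [sigma_even_prod (2*J+5+2*m) J, sigma_even_prod (2*J+3+2*m) J, ← Finset.prod_mul_distrib,
      ← Finset.prod_mul_distrib]
    refine Finset.prod_congr rfl fun i hi => ?_
    rw [Finset.mem_range] at hi
    have e1 : 2*J+5+2*m+2*i+1 = (2*J+3+2*m+2*i+1)+2 := by omega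
    have e2 : 2*(J+m-i)+2 = (2*J+3+2*m+2*i+1)+1-(4*i+3) := by omega
    have e3 : 2*(J+m-i)+3 = (2*J+3+2*m+2*i+1)+2-(4*i+3) := by omega
    have e4 : 2*J+2*m+4+2*i+1 = (2*J+3+2*m+2*i+1)+1 := by omega
    have e5 : 2*J+2*m+4+2*i+2 = (2*J+3+2*m+2*i+1)+2 := by omega
    rw [e1, e2, e3, e4, e5]
    exact choose_two_step (2*J+3+2*m+2*i+1) (4*i+3)
  have mainQ : (sigmaNG (2*J+5+2*m) (2*J+2) : ℚ)
        * ∏ i ∈ range (J+1), (((2*(J+m-i)+2)*(2*(J+m-i)+3) : ℕ) : ℚ)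
      = (sigmaNG (2*J+3+2*m) (2*J+2) : ℚ)
        * ∏ i ∈ range (J+1), (((2*J+2*m+4+2*i+1)*(2*J+2*m+4+2*i+2) : ℕ) : ℚ) := by
    exact_mod_cast main
  rw [descEval J m, ascEval (2*J+2*m+4) (J+1)] at mainQ
  have hXne : Qf (2*J+2*m+3) / Qf (2*m+1) ≠ 0 := div_ne_zero (Qf_ne _) (Qf_ne _)
  apply mul_right_cancel₀ hXne
  rw [mainQ]
  unfold RF
  rw [show 2*J+2*m+4+2*(J+1) = 4*J+2*m+6 from by omega,
    show 2*(2*J+2)+2*m+2 = 4*J+2*m+6 from by omega,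
    show 2*J+2+2*m+1 = 2*J+2*m+3 from by omega,
    show 2*J+2+2*m+2 = 2*J+2*m+4 from by omega]
  have h1 := Qf_ne (2*J+2*m+3)
  have h2 := Qf_ne (2*J+2*m+4)
  have h3 := Qf_ne (2*m+1)
  field_simp

lemma sig_odd (J m : ℕ) :
    (sigmaNG (2*J+2+2*m) (2*J+1) : ℚ)
      = 2^(2*J+1) * (sigmaNG (2*J+1) (2*J+1) : ℚ) * F (2*J+2) m := by
  induction m with
  | zero =>
      rw [show 2*J+2+2*0 = 2*J+2 from by omega, F_M0, mul_one]
      exact base_odd J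
  | succ k ih =>
      rw [show 2*J+2+2*(k+1) = 2*J+4+2*k from by omega, step_odd J k, ih]
      have hF : F (2*J+2) (k+1) = F (2*J+2) k * RF (2*J+1) k := by
        have h := Fvert_eval (2*J+1) k
        rw [show 2*J+1+1 = 2*J+2 from by omega] at h
        exact h
      rw [hF]
      ring

lemma sig_even (J m : ℕ) :
    (sigmaNG (2*J+3+2*m) (2*J+2) : ℚ)
      = 2^(2*J+2) * (sigmaNG (2*J+2) (2*J+2) : ℚ) * F (2*J+3) m := by
  induction m with
  | zero =>
      rw [show 2*J+3+2*0 = 2*J+3 from by omega, F_M0, mul_one]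
      exact base_even J
  | succ k ih =>
      rw [show 2*J+3+2*(k+1) = 2*J+5+2*k from by omega, step_even J k, ih]
      have hF : F (2*J+3) (k+1) = F (2*J+3) k * RF (2*J+2) k := by
        have h := Fvert_eval (2*J+2) k
        rw [show 2*J+2+1 = 2*J+3 from by omega] at h
        exact h
      rw [hF]
      ring

lemma sigma_gg_pos (g : ℕ) (hg : 1 ≤ g) : 0 < sigmaNG g g := by
  rcases Nat.even_or_odd g with he | ho
  · obtain ⟨J, hJ⟩ : ∃ J, g = 2*J+2 := by
      rcases he with ⟨c, hc⟩
      exact ⟨c - 1, by omega⟩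
    subst hJ
    rw [sigma_even_prod (2*J+2) J]
    refine Finset.prod_pos fun i hi => ?_
    rw [Finset.mem_range] at hi
    exact Nat.choose_pos (by omega)
  · obtain ⟨J, hJ⟩ : ∃ J, g = 2*J+1 := by
      rcases ho with ⟨c, hc⟩
      exact ⟨c, by omega⟩
    subst hJ
    rw [sigma_odd_prod (2*J+1) J]
    refine Finset.prod_pos fun i hi => ?_
    rw [Finset.mem_range] at hi
    exact Nat.choose_pos (by omega)

lemma sigmaF (g m : ℕ) (hg : 1 ≤ g) :
    (sigmaNG (g+1+2*m) g : ℚ) = 2^g * (sigmaNG g g : ℚ) * F (g+1) m := by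
  rcases Nat.even_or_odd g with he | ho
  · obtain ⟨J, hJ⟩ : ∃ J, g = 2*J+2 := by
      rcases he with ⟨c, hc⟩
      exact ⟨c - 1, by omega⟩
    subst hJ
    rw [show 2*J+2+1+2*m = 2*J+3+2*m from by omega]
    have h := sig_even J m
    rw [show 2*J+3 = 2*J+2+1 from by omega] at h
    exact h
  · obtain ⟨J, hJ⟩ : ∃ J, g = 2*J+1 := by
      rcases ho with ⟨c, hc⟩
      exact ⟨c, by omega⟩
    subst hJ
    rw [show 2*J+1+1+2*m = 2*J+2+2*m from by omega]
    have h := sig_odd J m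
    rw [show 2*J+2 = 2*J+1+1 from by omega] at h
    exact h

end Det


end CatHankelAux

open CatHankelAux

/-- For `n ≥ g + 1`, `g ≥ 1`, with `n ≡ g + 1 (mod 2)` and `m = (n−g−1)/2`,
the Hankel determinant `b₀(n) = det(c_{g+i+j−1})_{1 ≤ i,j ≤ m}` of Catalan
numbers equals `(σ_{n,g}/σ_{g,g}) · 2^{−g}`. -/
theorem b_zero_odd_case
    (g n : ℕ) (hg : 1 ≤ g) (hn : g + 1 ≤ n) (hpar : n % 2 = (g + 1) % 2) :
    Matrix.det (Matrix.of fun i j : Fin ((n - g - 1) / 2) =>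
        (catalan (g + i + j + 1) : ℚ))
      = ((sigmaNG n g : ℚ) / (sigmaNG g g : ℚ)) / 2 ^ g := by
  set m := (n - g - 1) / 2 with hmdef
  have hn2 : n = g + 1 + 2*m := by omega
  have hmat : (Matrix.of fun i j : Fin m => (catalan (g + (i:ℕ) + (j:ℕ) + 1) : ℚ))
      = Hk (fun k => (catalan k : ℚ)) (g+1) m := by
    ext i j
    simp only [Hk, Matrix.of_apply]
    exact_mod_cast congrArg (fun x => (catalan x : ℚ)) (show g + (i:ℕ) + j + 1 = (i:ℕ) + j + (g+1) by omega)
  rw [hmat, hankel_det m (g+1), hn2, sigmaF g m hg]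
  have h1 : (sigmaNG g g : ℚ) ≠ 0 := by
    exact_mod_cast (sigma_gg_pos g hg).ne'
  have h2 : (2:ℚ)^g ≠ 0 := by positivity
  field_simp
end
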